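/- arXiv:1708.04507 — 7 statements merged into one kernel-verified Lean document; each statement's English description precedes it below -/
import Mathlib

section
/- For positive integers n and r, and s ≥ 1, the generalized Ramanujan sum c_{r,s}(n) = Σ_{1≤j≤r^s, (j,r^s)_s=1} exp(2πi·nj/r^s) satisfies c_{r,s}(n) = Σ_{d^s | gcd-type divisor, i.e., d | r and d^s | n} d^s · μ(r/d), where μ is the Möbius function. Here (a,b)_s denotes the largest s-th power l^s dividing both a and b. -/
open Finset

/-- The generalized gcd `(a,b)_s`: the largest `s`-th power dividing both `a` and `b`. -/
noncomputable def ggcd (s a b : ℕ) : ℕ :=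
  sSup {m : ℕ | (∃ l : ℕ, m = l ^ s) ∧ m ∣ a ∧ m ∣ b}

/-- The generalized Ramanujan sum `c_{r,s}(n)`. -/
noncomputable def crs (s r n : ℕ) : ℂ :=
  ∑ j ∈ Finset.Icc 1 (r ^ s),
    if ggcd s j (r ^ s) = 1 then Complex.exp (2 * Real.pi * Complex.I * n * j / (r ^ s)) else 0

/-- The discrete Fourier transform of an `r^s`-periodic function. -/
noncomputable def dft (s r : ℕ) (f : ℕ → ℂ) (n : ℕ) : ℂ :=
  ∑ k ∈ Finset.Icc 1 (r ^ s), f k * Complex.exp (-(2 * Real.pi * Complex.I * k * n / (r ^ s)))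

/-- A function is `(r,s)`-even if `f(n) = f((n, r^s)_s)` for all `n`. -/
def IsRSEven (s r : ℕ) (f : ℕ → ℂ) : Prop := ∀ n, f n = f (ggcd s n (r ^ s))

lemma aux_lcm_pow_dvd {j d g s : ℕ} (hj : j ≠ 0) (hd : d ≠ 0) (hg : g ≠ 0)
    (h1 : d ^ s ∣ j) (h2 : g ^ s ∣ j) : Nat.lcm d g ^ s ∣ j := by
  have hl : Nat.lcm d g ≠ 0 := Nat.lcm_ne_zero hd hg
  rw [← Nat.factorization_le_iff_dvd (pow_ne_zero _ hd) hj] at h1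
  rw [← Nat.factorization_le_iff_dvd (pow_ne_zero _ hg) hj] at h2
  rw [← Nat.factorization_le_iff_dvd (pow_ne_zero _ hl) hj]
  rw [Nat.factorization_pow] at *
  rw [Nat.factorization_lcm hd hg]
  intro p
  have := h1 p
  have := h2 p
  simp only [Finsupp.smul_apply, Finsupp.sup_apply, smul_eq_mul] at *
  rcases le_total (d.factorization p) (g.factorization p) with h | h
  · rw [sup_eq_right.2 h]; omega
  · rw [sup_eq_left.2 h]; omega

lemma aux_mu_sum {r s j : ℕ} (hr : 0 < r) (hs : s ≠ 0) (hj : j ≠ 0) :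
    (∑ d ∈ r.divisors.filter (fun d => d ^ s ∣ j), ArithmeticFunction.moebius d) =
      if ggcd s j (r ^ s) = 1 then 1 else 0 := by
  set S := r.divisors.filter (fun d => d ^ s ∣ j) with hS
  have h1S : (1 : ℕ) ∈ S := by
    rw [hS, mem_filter]
    exact ⟨Nat.one_mem_divisors.2 hr.ne', by simp⟩
  set g := S.max' ⟨1, h1S⟩ with hg
  have hgS : g ∈ S := Finset.max'_mem _ _
  rw [hS, mem_filter, Nat.mem_divisors] at hgS
  obtain ⟨⟨hgr, -⟩, hgsj⟩ := hgS
  have hg0 : g ≠ 0 := by rintro h; rw [h] at hgr; exact hr.ne' (Nat.eq_zero_of_zero_dvd hgr)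
  have hSd : S = g.divisors := by
    ext d
    rw [Nat.mem_divisors, hS, mem_filter, Nat.mem_divisors]
    constructor
    · rintro ⟨⟨hdr, -⟩, hdsj⟩
      have hd0 : d ≠ 0 := by rintro rfl; exact hr.ne' (Nat.eq_zero_of_zero_dvd hdr)
      have hlcm : Nat.lcm d g ∈ S := by
        rw [hS, mem_filter, Nat.mem_divisors]
        exact ⟨⟨Nat.lcm_dvd hdr hgr, hr.ne'⟩, aux_lcm_pow_dvd hj hd0 hg0 hdsj hgsj⟩
      have hle : Nat.lcm d g ≤ g := Finset.le_max' _ _ hlcm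
      have hge : g ≤ Nat.lcm d g := Nat.le_of_dvd
        (Nat.pos_of_ne_zero (Nat.lcm_ne_zero hd0 hg0)) (Nat.dvd_lcm_right d g)
      have : Nat.lcm d g = g := le_antisymm hle hge
      exact ⟨this ▸ Nat.dvd_lcm_left d g, hg0⟩
    · rintro ⟨hdg, -⟩
      exact ⟨⟨hdg.trans hgr, hr.ne'⟩, (pow_dvd_pow_of_dvd hdg s).trans hgsj⟩
  have hsum : (∑ d ∈ g.divisors, ArithmeticFunction.moebius d) = if g = 1 then 1 else 0 := by
    have h := congrArg (fun f : ArithmeticFunction ℤ => f g)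
      ArithmeticFunction.moebius_mul_coe_zeta
    simp only [ArithmeticFunction.coe_mul_zeta_apply, ArithmeticFunction.one_apply] at h
    exact h
  have hbound : ∀ m ∈ {m : ℕ | (∃ l : ℕ, m = l ^ s) ∧ m ∣ j ∧ m ∣ r ^ s}, m ≤ g ^ s := by
    rintro m ⟨⟨l, rfl⟩, hmj, hmr⟩
    have hlr : l ∣ r := (Nat.pow_dvd_pow_iff hs).1 hmr
    have hlS : l ∈ S := by
      rw [hS, mem_filter, Nat.mem_divisors]
      exact ⟨⟨hlr, hr.ne'⟩, hmj⟩
    exact Nat.pow_le_pow_left (Finset.le_max' _ _ hlS) s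
  have hgg : ggcd s j (r ^ s) = g ^ s := by
    unfold ggcd
    apply le_antisymm
    · exact csSup_le ⟨1, ⟨1, (one_pow s).symm⟩, one_dvd _, one_dvd _⟩ hbound
    · exact le_csSup ⟨g ^ s, hbound⟩ ⟨⟨g, rfl⟩, hgsj, pow_dvd_pow_of_dvd hgr s⟩
  rw [hSd, hsum, hgg]
  have : g ^ s = 1 ↔ g = 1 := by
    constructor
    · intro h
      exact Nat.dvd_one.1 (h ▸ dvd_pow_self g hs)
    · intro h; rw [h, one_pow]
  simp [this, hs]

lemma aux_sum_exp (m a : ℕ) (hm : 0 < m) :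
    ∑ k ∈ Finset.Icc 1 m, Complex.exp (2 * Real.pi * Complex.I * a * k / m) =
      if m ∣ a then (m : ℂ) else 0 := by
  have hm0 : (m : ℂ) ≠ 0 := Nat.cast_ne_zero.2 hm.ne'
  have h2 : (2 * Real.pi * Complex.I : ℂ) ≠ 0 := by
    simp [Real.pi_ne_zero, Complex.I_ne_zero, Complex.ofReal_ne_zero]
  set z : ℂ := Complex.exp (2 * Real.pi * Complex.I * a / m) with hz
  have hzk : ∀ k : ℕ, Complex.exp (2 * Real.pi * Complex.I * a * k / m) = z ^ k := by
    intro k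
    rw [hz, ← Complex.exp_nat_mul]
    ring_nf
  have hsum : ∑ k ∈ Finset.Icc 1 m, Complex.exp (2 * Real.pi * Complex.I * a * k / m)
      = z * ∑ k ∈ Finset.range m, z ^ k := by
    rw [Finset.mul_sum]
    rw [show Finset.Icc 1 m = Finset.Ico 1 (m+1) by rfl, Finset.sum_Ico_eq_sum_range]
    simp only [Nat.add_sub_cancel]
    refine Finset.sum_congr rfl fun k _ => ?_
    rw [hzk]; ring
  have hzm : z ^ m = 1 := by
    rw [hz, ← Complex.exp_nat_mul, Complex.exp_eq_one_iff]
    exact ⟨a, by field_simp; norm_cast⟩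
  by_cases hdvd : m ∣ a
  · simp only [hdvd, if_pos]
    have hz1 : z = 1 := by
      rw [hz, Complex.exp_eq_one_iff]
      refine ⟨((a / m : ℕ) : ℤ), ?_⟩
      have hma : (m : ℂ) * ((a / m : ℕ) : ℂ) = (a : ℂ) := by
        exact_mod_cast congrArg (Nat.cast : ℕ → ℂ) (Nat.mul_div_cancel' hdvd)
      push_cast
      rw [← hma]
      field_simp
      norm_cast
    rw [hsum, hz1]
    simp
  · simp only [hdvd, if_neg, not_false_iff]
    have hz1 : z ≠ 1 := by
      intro h
      rw [hz, Complex.exp_eq_one_iff] at h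
      obtain ⟨k, hk⟩ := h
      apply hdvd
      have h3 : (a : ℂ) / m = k := by
        apply mul_left_cancel₀ h2
        rw [mul_div_assoc] at hk
        rw [hk]; ring
      have h4 : (a : ℂ) = (m : ℂ) * k := by field_simp at h3; rw [h3]
      have h5 : (m : ℤ) ∣ (a : ℤ) := ⟨k, by exact_mod_cast h4⟩
      exact_mod_cast h5
    rw [hsum, geom_sum_eq hz1, hzm]
    simp

lemma aux_inner {r d : ℕ} (s n : ℕ) (hr : 0 < r) (hd : d ∣ r) :
    ∑ j ∈ (Finset.Icc 1 (r ^ s)).filter (fun j => d ^ s ∣ j),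
      Complex.exp (2 * Real.pi * Complex.I * n * j / (r ^ s : ℕ))
    = if (r / d) ^ s ∣ n then (((r / d) ^ s : ℕ) : ℂ) else 0 := by
  have hd0 : 0 < d := Nat.pos_of_dvd_of_pos hd hr
  have hm : 0 < (r / d) ^ s := pow_pos (Nat.div_pos (Nat.le_of_dvd hr hd) hd0) s
  have hds : d ^ s * (r / d) ^ s = r ^ s := by
    rw [← mul_pow, Nat.mul_div_cancel' hd]
  have hd0s : (0:ℕ) < d ^ s := pow_pos hd0 s
  have key : ∑ j ∈ (Finset.Icc 1 (r ^ s)).filter (fun j => d ^ s ∣ j),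
      Complex.exp (2 * Real.pi * Complex.I * n * j / (r ^ s : ℕ))
      = ∑ k ∈ Finset.Icc 1 ((r / d) ^ s),
        Complex.exp (2 * Real.pi * Complex.I * n * ((d ^ s * k : ℕ) : ℂ) / (r ^ s : ℕ)) := by
    refine Finset.sum_nbij' (fun j => j / d ^ s) (fun k => d ^ s * k) ?_ ?_ ?_ ?_ ?_
    · intro a ha
      rw [mem_filter, Finset.mem_Icc] at ha
      obtain ⟨⟨ha1, ha2⟩, hdvd⟩ := ha
      rw [Finset.mem_Icc]
      constructor
      · exact Nat.div_pos (Nat.le_of_dvd (by omega) hdvd) hd0s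
      · rw [← hds] at ha2
        calc a / d ^ s ≤ d ^ s * (r / d) ^ s / d ^ s := Nat.div_le_div_right ha2
          _ = (r / d) ^ s := Nat.mul_div_cancel_left _ hd0s
    · intro k hk
      rw [Finset.mem_Icc] at hk
      rw [mem_filter, Finset.mem_Icc]
      refine ⟨⟨Nat.one_le_iff_ne_zero.2 (Nat.mul_ne_zero hd0s.ne' (by omega)), ?_⟩, Dvd.intro _ rfl⟩
      calc d ^ s * k ≤ d ^ s * (r / d) ^ s := Nat.mul_le_mul_left _ hk.2
        _ = r ^ s := hds
    · intro a ha
      rw [mem_filter] at ha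
      exact Nat.mul_div_cancel' ha.2
    · intro k _
      exact Nat.mul_div_cancel_left _ hd0s
    · intro a ha
      rw [mem_filter] at ha
      rw [Nat.mul_div_cancel' ha.2]
  rw [key]
  have hterm : ∀ k : ℕ,
      Complex.exp (2 * Real.pi * Complex.I * n * ((d ^ s * k : ℕ) : ℂ) / (r ^ s : ℕ))
      = Complex.exp (2 * Real.pi * Complex.I * n * k / (((r / d) ^ s : ℕ) : ℂ)) := by
    intro k
    congr 1
    have hrc : ((r ^ s : ℕ) : ℂ) = ((d ^ s : ℕ) : ℂ) * (((r / d) ^ s : ℕ) : ℂ) := by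
      rw [← hds]; push_cast; ring
    have hA : ((d ^ s : ℕ) : ℂ) ≠ 0 := Nat.cast_ne_zero.2 hd0s.ne'
    have hB : (((r / d) ^ s : ℕ) : ℂ) ≠ 0 := Nat.cast_ne_zero.2 hm.ne'
    rw [hrc, Nat.cast_mul]
    rw [show 2 * (Real.pi : ℂ) * Complex.I * (n : ℂ) * (((d ^ s : ℕ) : ℂ) * (k : ℂ))
        = ((d ^ s : ℕ) : ℂ) * (2 * (Real.pi : ℂ) * Complex.I * (n : ℂ) * (k : ℂ)) from by ring]
    exact mul_div_mul_left _ _ hA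
  rw [Finset.sum_congr rfl fun k _ => hterm k]
  exact aux_sum_exp ((r / d) ^ s) n hm

theorem stmt0 (n r s : ℕ) (hn : 0 < n) (hr : 0 < r) (hs : 1 ≤ s) :
    crs s r n =
      ∑ d ∈ r.divisors.filter (fun d => d ^ s ∣ n),
        (d : ℂ) ^ s * ((ArithmeticFunction.moebius (r / d) : ℤ) : ℂ) := by
  have hs0 : s ≠ 0 := by omega
  have hrs : 0 < r ^ s := pow_pos hr s
  unfold crs
  have step1 : ∀ j ∈ Finset.Icc 1 (r ^ s),
      (if ggcd s j (r ^ s) = 1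
        then Complex.exp (2 * Real.pi * Complex.I * n * j / (r ^ s)) else 0)
      = ∑ d ∈ r.divisors, (if d ^ s ∣ j
          then ((ArithmeticFunction.moebius d : ℤ) : ℂ) *
            Complex.exp (2 * Real.pi * Complex.I * n * j / (r ^ s)) else 0) := by
    intro j hj
    rw [Finset.mem_Icc] at hj
    have hj0 : j ≠ 0 := by omega
    have hmu := aux_mu_sum hr hs0 hj0
    have hc : ((∑ d ∈ r.divisors.filter (fun d => d ^ s ∣ j),
        ArithmeticFunction.moebius d : ℤ) : ℂ)
        = if ggcd s j (r ^ s) = 1 then 1 else 0 := by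
      rw [hmu]; split_ifs <;> simp
    rw [← Finset.sum_filter]
    calc (if ggcd s j (r ^ s) = 1
          then Complex.exp (2 * Real.pi * Complex.I * n * j / (r ^ s)) else 0)
        = (if ggcd s j (r ^ s) = 1 then (1:ℂ) else 0) *
            Complex.exp (2 * Real.pi * Complex.I * n * j / (r ^ s)) := by
          split_ifs <;> simp
      _ = ((∑ d ∈ r.divisors.filter (fun d => d ^ s ∣ j),
            ArithmeticFunction.moebius d : ℤ) : ℂ) *
            Complex.exp (2 * Real.pi * Complex.I * n * j / (r ^ s)) := by rw [hc]
      _ = ∑ d ∈ r.divisors.filter (fun d => d ^ s ∣ j),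
            ((ArithmeticFunction.moebius d : ℤ) : ℂ) *
            Complex.exp (2 * Real.pi * Complex.I * n * j / (r ^ s)) := by
          rw [← Finset.sum_mul]
          push_cast
          ring
  rw [Finset.sum_congr rfl step1, Finset.sum_comm]
  have step2 : ∀ d ∈ r.divisors,
      (∑ j ∈ Finset.Icc 1 (r ^ s), if d ^ s ∣ j
          then ((ArithmeticFunction.moebius d : ℤ) : ℂ) *
            Complex.exp (2 * Real.pi * Complex.I * n * j / (r ^ s)) else 0)
      = ((ArithmeticFunction.moebius d : ℤ) : ℂ) *
          (if (r / d) ^ s ∣ n then (((r / d) ^ s : ℕ) : ℂ) else 0) := by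
    intro d hd
    rw [Nat.mem_divisors] at hd
    rw [← Finset.sum_filter, ← Finset.mul_sum, ← aux_inner s n hr hd.1]
    congr 1
    refine Finset.sum_congr rfl fun j _ => ?_
    norm_cast
  rw [Finset.sum_congr rfl step2]
  have reidx := Nat.sum_div_divisors (α := ℂ) r
    (fun d => ((ArithmeticFunction.moebius (r / d) : ℤ) : ℂ) *
      (if d ^ s ∣ n then ((d ^ s : ℕ) : ℂ) else 0))
  have lhs_eq : ∑ d ∈ r.divisors,
      ((ArithmeticFunction.moebius d : ℤ) : ℂ) *
        (if (r / d) ^ s ∣ n then (((r / d) ^ s : ℕ) : ℂ) else 0)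
      = ∑ d ∈ r.divisors,
        (fun d => ((ArithmeticFunction.moebius (r / d) : ℤ) : ℂ) *
          (if d ^ s ∣ n then ((d ^ s : ℕ) : ℂ) else 0)) (r / d) := by
    refine Finset.sum_congr rfl fun d hd => ?_
    rw [Nat.mem_divisors] at hd
    simp only []
    rw [Nat.div_div_self hd.1 hr.ne']
  rw [lhs_eq, reidx]
  have final : ∀ d ∈ r.divisors,
      ((ArithmeticFunction.moebius (r / d) : ℤ) : ℂ) *
        (if d ^ s ∣ n then ((d ^ s : ℕ) : ℂ) else 0)
      = if d ^ s ∣ n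
          then (d : ℂ) ^ s * ((ArithmeticFunction.moebius (r / d) : ℤ) : ℂ) else 0 := by
    intro d _
    split_ifs
    · push_cast; ring
    · simp
  rw [Finset.sum_congr rfl final]
  exact (Finset.sum_filter _ _).symm
end

section
/- If e divides n, then the generalized Ramanujan sum c_{e,s} is (n,s)-even: for all m, c_{e,s}(m) = c_{e,s}((m, n^s)_s). -/
open Finset

lemma ggcd_bddAbove (s a b : ℕ) (hb : 0 < b) :
    BddAbove {m : ℕ | (∃ l : ℕ, m = l ^ s) ∧ m ∣ a ∧ m ∣ b} :=
  ⟨b, fun _ hx => Nat.le_of_dvd hb hx.2.2⟩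

lemma ggcd_mem (s a b : ℕ) (hb : 0 < b) :
    (∃ l : ℕ, ggcd s a b = l ^ s) ∧ ggcd s a b ∣ a ∧ ggcd s a b ∣ b := by
  have h1 : (1:ℕ) ∈ {m : ℕ | (∃ l : ℕ, m = l ^ s) ∧ m ∣ a ∧ m ∣ b} :=
    ⟨⟨1, (one_pow s).symm⟩, one_dvd _, one_dvd _⟩
  exact Nat.sSup_mem ⟨1, h1⟩ (ggcd_bddAbove s a b hb)

lemma pow_lcm_dvd {s a c l : ℕ} (hc : c ^ s ∣ a) (hl : l ^ s ∣ a) : Nat.lcm c l ^ s ∣ a := by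
  rcases eq_or_ne a 0 with rfl | ha
  · exact dvd_zero _
  rcases eq_or_ne s 0 with rfl | hs
  · simp
  have hc0 : c ≠ 0 := by
    rintro rfl; rw [zero_pow hs] at hc; exact ha (Nat.eq_zero_of_zero_dvd hc)
  have hl0 : l ≠ 0 := by
    rintro rfl; rw [zero_pow hs] at hl; exact ha (Nat.eq_zero_of_zero_dvd hl)
  have key : Nat.lcm c l ^ s ∣ Nat.lcm (c ^ s) (l ^ s) := by
    rw [← Nat.factorization_le_iff_dvd (pow_ne_zero _ (Nat.lcm_ne_zero hc0 hl0))
      (Nat.lcm_ne_zero (pow_ne_zero _ hc0) (pow_ne_zero _ hl0))]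
    rw [Nat.factorization_pow, Nat.factorization_lcm hc0 hl0,
      Nat.factorization_lcm (pow_ne_zero _ hc0) (pow_ne_zero _ hl0),
      Nat.factorization_pow, Nat.factorization_pow]
    intro p
    simp only [Finsupp.smul_apply, Finsupp.sup_apply, smul_eq_mul]
    rcases le_total (c.factorization p) (l.factorization p) with h | h
    · rw [sup_eq_right.2 h]
      exact le_trans (Nat.mul_le_mul_left s (le_refl _)) le_sup_right
    · rw [sup_eq_left.2 h]
      exact le_sup_left
  exact key.trans (Nat.lcm_dvd hc hl)

lemma pow_dvd_ggcd {s a b c : ℕ} (hb : 0 < b) (h1 : c ^ s ∣ a) (h2 : c ^ s ∣ b) :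
    c ^ s ∣ ggcd s a b := by
  obtain ⟨⟨l, hl⟩, hga, hgb⟩ := ggcd_mem s a b hb
  have hLa : Nat.lcm c l ^ s ∣ a := pow_lcm_dvd h1 (hl ▸ hga)
  have hLb : Nat.lcm c l ^ s ∣ b := pow_lcm_dvd h2 (hl ▸ hgb)
  have hmem : Nat.lcm c l ^ s ∈ {m : ℕ | (∃ l : ℕ, m = l ^ s) ∧ m ∣ a ∧ m ∣ b} :=
    ⟨⟨Nat.lcm c l, rfl⟩, hLa, hLb⟩
  have hle : Nat.lcm c l ^ s ≤ ggcd s a b := le_csSup (ggcd_bddAbove s a b hb) hmem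
  have hdvd : ggcd s a b ∣ Nat.lcm c l ^ s := by
    rw [hl]; exact pow_dvd_pow_of_dvd (Nat.dvd_lcm_right c l) s
  have hpos : 0 < Nat.lcm c l ^ s := Nat.pos_of_dvd_of_pos hLb hb
  have heq : Nat.lcm c l ^ s = ggcd s a b :=
    le_antisymm hle (Nat.le_of_dvd hpos hdvd)
  rw [← heq]
  exact pow_dvd_pow_of_dvd (Nat.dvd_lcm_left c l) s

open ArithmeticFunction in
lemma sum_mu (D : ℕ) : ∑ d ∈ D.divisors, ((moebius d : ℤ) : ℂ) = if D = 1 then 1 else 0 := by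
  have h := congrArg (fun f : ArithmeticFunction ℂ => f D) (coe_moebius_mul_coe_zeta (R := ℂ))
  simp only [coe_mul_zeta_apply, one_apply] at h
  simpa using h

open ArithmeticFunction in
lemma indicator_eq (s e : ℕ) (hs : 0 < s) (he : 0 < e) (j : ℕ) :
    (if ggcd s j (e ^ s) = 1 then (1:ℂ) else 0)
      = ∑ d ∈ e.divisors, (if d ^ s ∣ j then ((moebius d : ℤ) : ℂ) else 0) := by
  have hes : 0 < e ^ s := pow_pos he s
  obtain ⟨⟨l, hl⟩, hgj, hge⟩ := ggcd_mem s j (e ^ s) hes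
  have hl0 : l ≠ 0 := by
    rintro rfl
    rw [zero_pow hs.ne'] at hl
    rw [hl] at hge
    exact absurd (Nat.eq_zero_of_zero_dvd hge) hes.ne'
  have hle : l ∣ e := (Nat.pow_dvd_pow_iff hs.ne').1 (hl ▸ hge)
  have hset : e.divisors.filter (fun d => d ^ s ∣ j) = l.divisors := by
    ext d
    simp only [Finset.mem_filter, Nat.mem_divisors]
    constructor
    · rintro ⟨⟨hde, -⟩, hdj⟩
      have : d ^ s ∣ ggcd s j (e ^ s) :=
        pow_dvd_ggcd hes hdj (pow_dvd_pow_of_dvd hde s)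
      rw [hl] at this
      exact ⟨(Nat.pow_dvd_pow_iff hs.ne').1 this, hl0⟩
    · rintro ⟨hdl, -⟩
      exact ⟨⟨hdl.trans hle, he.ne'⟩, (pow_dvd_pow_of_dvd hdl s).trans (hl ▸ hgj)⟩
  rw [← Finset.sum_filter, hset, sum_mu]
  have : ggcd s j (e ^ s) = 1 ↔ l = 1 := by
    rw [hl]
    exact Nat.pow_eq_one.trans (by simp [hs.ne'])
  simp [this]

lemma sum_exp (N m : ℕ) (hN : 0 < N) :
    ∑ j ∈ Finset.Icc 1 N, Complex.exp (2 * Real.pi * Complex.I * m * j / N)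
      = if N ∣ m then (N : ℂ) else 0 := by
  have hN0 : (N : ℂ) ≠ 0 := Nat.cast_ne_zero.2 hN.ne'
  have h2pi : (2 * Real.pi * Complex.I : ℂ) ≠ 0 := by
    simp [Real.pi_ne_zero, Complex.I_ne_zero]
  have hx : ∀ j : ℕ, Complex.exp (2 * Real.pi * Complex.I * m * j / N)
      = Complex.exp (2 * Real.pi * Complex.I * m / N) ^ j := by
    intro j
    rw [← Complex.exp_nat_mul]
    congr 1
    field_simp
  set x := Complex.exp (2 * Real.pi * Complex.I * m / N) with hxdef
  by_cases h : N ∣ m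
  · obtain ⟨k, rfl⟩ := h
    have hx1 : x = 1 := by
      rw [hxdef, Complex.exp_eq_one_iff]
      refine ⟨k, ?_⟩
      push_cast
      field_simp
    simp only [hx, hx1, one_pow, Finset.sum_const, Nat.card_Icc, smul_eq_mul, mul_one]
    simp
  · have hx1 : x ≠ 1 := by
      intro hcon
      rw [hxdef, Complex.exp_eq_one_iff] at hcon
      obtain ⟨k, hk⟩ := hcon
      apply h
      have hm : (m : ℂ) = k * N := by
        field_simp at hk
        have := mul_right_cancel₀ h2pi (by linear_combination (2 * Real.pi * Complex.I) * hk :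
          (m : ℂ) * (2 * Real.pi * Complex.I) = (k * N) * (2 * Real.pi * Complex.I))
        exact this
      have hmz : (m : ℤ) = k * N := by exact_mod_cast hm
      exact Int.natCast_dvd_natCast.1 ⟨k, by rw [hmz]; ring⟩
    have hxN : x ^ N = 1 := by
      rw [hxdef, ← Complex.exp_nat_mul, Complex.exp_eq_one_iff]
      refine ⟨m, ?_⟩
      field_simp
      norm_cast
    rw [if_neg h]
    calc ∑ j ∈ Finset.Icc 1 N, Complex.exp (2 * Real.pi * Complex.I * m * j / N)
        = ∑ j ∈ Finset.Ico 1 (N + 1), x ^ j := by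
          rw [Finset.Ico_add_one_right_eq_Icc]; exact Finset.sum_congr rfl fun j _ => hx j
      _ = ∑ i ∈ Finset.range N, x ^ (1 + i) := by
          rw [Finset.sum_Ico_eq_sum_range]; simp
      _ = x * ∑ i ∈ Finset.range N, x ^ i := by
          rw [Finset.mul_sum]; exact Finset.sum_congr rfl fun i _ => by rw [pow_add, pow_one]
      _ = 0 := by rw [geom_sum_eq hx1, hxN, sub_self, zero_div, mul_zero]

lemma filter_dvd_Icc (D C : ℕ) (hD : 0 < D) :
    (Finset.Icc 1 (D * C)).filter (fun j => D ∣ j)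
      = (Finset.Icc 1 C).map ⟨fun k => D * k, (show Function.Injective (fun k => D * k) from fun a b h => by
          exact Nat.eq_of_mul_eq_mul_left hD h)⟩ := by
  ext j
  simp only [Finset.mem_filter, Finset.mem_Icc, Finset.mem_map, Function.Embedding.coeFn_mk]
  constructor
  · rintro ⟨⟨h1, h2⟩, k, rfl⟩
    refine ⟨k, ⟨?_, ?_⟩, rfl⟩
    · rcases Nat.eq_zero_or_pos k with rfl | hk
      · simp at h1
      · exact hk
    · exact Nat.le_of_mul_le_mul_left h2 hD
  · rintro ⟨k, ⟨hk1, hk2⟩, rfl⟩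
    exact ⟨⟨Nat.one_le_iff_ne_zero.2 (Nat.mul_ne_zero hD.ne' (Nat.one_le_iff_ne_zero.1 hk1)),
      Nat.mul_le_mul_left D hk2⟩, Dvd.intro k rfl⟩

open ArithmeticFunction in
lemma crs_eq (s e : ℕ) (hs : 0 < s) (he : 0 < e) (m : ℕ) :
    crs s e m = ∑ d ∈ e.divisors,
      ((moebius d : ℤ) : ℂ) * (if (e / d) ^ s ∣ m then (((e / d) ^ s : ℕ) : ℂ) else 0) := by
  rw [crs]
  have step1 : ∀ j ∈ Finset.Icc 1 (e ^ s),
      (if ggcd s j (e ^ s) = 1 then Complex.exp (2 * Real.pi * Complex.I * m * j / (e : ℂ) ^ s) else 0)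
        = ∑ d ∈ e.divisors, (if d ^ s ∣ j then
            ((moebius d : ℤ) : ℂ) * Complex.exp (2 * Real.pi * Complex.I * m * j / (e : ℂ) ^ s) else 0) := by
    intro j _
    have h1 : (if ggcd s j (e ^ s) = 1 then Complex.exp (2 * Real.pi * Complex.I * m * j / (e : ℂ) ^ s) else 0)
        = (if ggcd s j (e ^ s) = 1 then (1:ℂ) else 0) * Complex.exp (2 * Real.pi * Complex.I * m * j / (e : ℂ) ^ s) := by
      split <;> simp
    rw [h1, indicator_eq s e hs he j, Finset.sum_mul]
    exact Finset.sum_congr rfl fun d _ => by split <;> simp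
  rw [Finset.sum_congr rfl step1, Finset.sum_comm]
  refine Finset.sum_congr rfl fun d hd => ?_
  obtain ⟨hde, -⟩ := Nat.mem_divisors.1 hd
  obtain ⟨c, rfl⟩ := hde
  have hd0 : d ≠ 0 := by rintro rfl; simp at he
  have hc0 : c ≠ 0 := by rintro rfl; simp at he
  have hdC : (d : ℂ) ≠ 0 := Nat.cast_ne_zero.2 hd0
  have hcC : (c : ℂ) ≠ 0 := Nat.cast_ne_zero.2 hc0
  rw [← Finset.sum_filter, mul_pow,
    filter_dvd_Icc (d ^ s) (c ^ s) (pow_pos (Nat.pos_of_ne_zero hd0) s),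
    Finset.sum_map]
  simp only [Function.Embedding.coeFn_mk]
  rw [Nat.mul_div_cancel_left c (Nat.pos_of_ne_zero hd0), ← Finset.mul_sum]
  congr 1
  have hterm : ∀ k : ℕ,
      Complex.exp (2 * Real.pi * Complex.I * m * ((d ^ s * k : ℕ) : ℂ) / ((d * c : ℕ) : ℂ) ^ s)
        = Complex.exp (2 * Real.pi * Complex.I * m * k / ((c ^ s : ℕ) : ℂ)) := by
    intro k
    congr 1
    push_cast
    field_simp
    ring
  rw [Finset.sum_congr rfl fun k _ => hterm k,
    sum_exp (c ^ s) m (pow_pos (Nat.pos_of_ne_zero hc0) s)]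

theorem stmt1 (s e n : ℕ) (hs : 0 < s) (hn : 0 < n) (he : e ∣ n) :
    ∀ m : ℕ, crs s e m = crs s e (ggcd s m (n ^ s)) := by
  intro m
  have he0 : 0 < e := Nat.pos_of_dvd_of_pos he hn
  rw [crs_eq s e hs he0, crs_eq s e hs he0]
  refine Finset.sum_congr rfl fun d hd => ?_
  obtain ⟨hde, -⟩ := Nat.mem_divisors.1 hd
  have hce : e / d ∣ e := Nat.div_dvd_of_dvd hde
  have hcn : (e / d) ^ s ∣ n ^ s := pow_dvd_pow_of_dvd (hce.trans he) s
  have hiff : (e / d) ^ s ∣ m ↔ (e / d) ^ s ∣ ggcd s m (n ^ s) := by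
    constructor
    · intro h; exact pow_dvd_ggcd (pow_pos hn s) h hcn
    · intro h; exact h.trans (ggcd_mem s m (n ^ s) (pow_pos hn s)).2.1
  rw [if_congr hiff rfl rfl]
end

section
/- The DFT of an (r,s)-even function is again (r,s)-even: if f(n) = f((n,r^s)_s) for all n, then f̂(n) = f̂((n,r^s)_s) for all n, where f̂(n) = Σ_{k=1}^{r^s} f(k) exp(-2πikn/r^s). -/
open Finset

private lemma lcm_pow_dvd {s a b n : ℕ} (hn : n ≠ 0) (ha : a ^ s ∣ n) (hb : b ^ s ∣ n) :
    Nat.lcm a b ^ s ∣ n := by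
  rcases Nat.eq_zero_or_pos s with rfl | hs
  · simpa using Nat.one_dvd n
  have ha0 : a ≠ 0 := by
    rintro rfl
    rw [zero_pow hs.ne'] at ha
    exact hn (Nat.eq_zero_of_zero_dvd ha)
  have hb0 : b ≠ 0 := by
    rintro rfl
    rw [zero_pow hs.ne'] at hb
    exact hn (Nat.eq_zero_of_zero_dvd hb)
  have hl0 : Nat.lcm a b ≠ 0 := Nat.lcm_ne_zero ha0 hb0
  rw [← Nat.factorization_le_iff_dvd (pow_ne_zero _ hl0) hn]
  rw [← Nat.factorization_le_iff_dvd (pow_ne_zero _ ha0) hn] at ha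
  rw [← Nat.factorization_le_iff_dvd (pow_ne_zero _ hb0) hn] at hb
  rw [Nat.factorization_pow] at ha hb ⊢
  rw [Nat.factorization_lcm ha0 hb0]
  intro p
  have hap := ha p
  have hbp := hb p
  simp only [Finsupp.smul_apply, Finsupp.sup_apply, smul_eq_mul] at *
  rcases le_total (a.factorization p) (b.factorization p) with h | h
  · rw [sup_of_le_right h]; exact hbp
  · rw [sup_of_le_left h]; exact hap

private lemma ggcd_mem_s4 {s : ℕ} (hs : 0 < s) {N : ℕ} (hN : N ≠ 0) (n : ℕ) :
    ggcd s n N ∈ {m : ℕ | (∃ l : ℕ, m = l ^ s) ∧ m ∣ n ∧ m ∣ N} := by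
  apply Nat.sSup_mem
  · exact ⟨1, ⟨1, (one_pow s).symm⟩, one_dvd _, one_dvd _⟩
  · exact ⟨N, fun m hm => Nat.le_of_dvd (Nat.pos_of_ne_zero hN) hm.2.2⟩

private lemma ggcd_dvd_iff {s : ℕ} (hs : 0 < s) {N : ℕ} (hN : N ≠ 0) (n l : ℕ) :
    l ^ s ∣ ggcd s n N ↔ l ^ s ∣ n ∧ l ^ s ∣ N := by
  obtain ⟨⟨c, hc⟩, hgn, hgN⟩ := ggcd_mem_s4 hs hN n
  constructor
  · exact fun h => ⟨h.trans hgn, h.trans hgN⟩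
  · rintro ⟨hln, hlN⟩
    have hg0 : ggcd s n N ≠ 0 := fun h => hN (Nat.eq_zero_of_zero_dvd (h ▸ hgN))
    have hLn : Nat.lcm l c ^ s ∣ n := by
      rcases Nat.eq_zero_or_pos n with rfl | hn
      · exact dvd_zero _
      · exact lcm_pow_dvd hn.ne' hln (hc ▸ hgn)
    have hLN : Nat.lcm l c ^ s ∣ N := lcm_pow_dvd hN hlN (hc ▸ hgN)
    have hmem : Nat.lcm l c ^ s ∈ {m : ℕ | (∃ l : ℕ, m = l ^ s) ∧ m ∣ n ∧ m ∣ N} :=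
      ⟨⟨Nat.lcm l c, rfl⟩, hLn, hLN⟩
    have hle : Nat.lcm l c ^ s ≤ ggcd s n N :=
      le_csSup ⟨N, fun m hm => Nat.le_of_dvd (Nat.pos_of_ne_zero hN) hm.2.2⟩ hmem
    have hdvd : ggcd s n N ∣ Nat.lcm l c ^ s := by
      rw [hc]; exact pow_dvd_pow_of_dvd (Nat.dvd_lcm_right l c) s
    have hL0 : Nat.lcm l c ^ s ≠ 0 := fun h => hN (Nat.eq_zero_of_zero_dvd (h ▸ hLN))
    have h1 : c ^ s ∣ Nat.lcm l c ^ s := pow_dvd_pow_of_dvd (Nat.dvd_lcm_right l c) s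
    have hL0 : 0 < Nat.lcm l c ^ s :=
      Nat.pos_of_ne_zero fun h => hN (Nat.eq_zero_of_zero_dvd (h ▸ hLN))
    have hge : ggcd s n N ≤ Nat.lcm l c ^ s := by
      rw [hc]; exact Nat.le_of_dvd hL0 h1
    have heq : Nat.lcm l c ^ s = ggcd s n N := le_antisymm hle hge
    exact heq ▸ pow_dvd_pow_of_dvd (Nat.dvd_lcm_left l c) s

private lemma exp_sum (M n : ℕ) (hM : 0 < M) :
    ∑ j ∈ Finset.Icc 1 M, Complex.exp (-(2 * Real.pi * Complex.I * j * n / M)) =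
      if M ∣ n then (M : ℂ) else 0 := by
  have hM0 : (M : ℂ) ≠ 0 := Nat.cast_ne_zero.mpr hM.ne'
  set z : ℂ := Complex.exp (-(2 * Real.pi * Complex.I * n / M)) with hz
  have hterm : ∀ j : ℕ, Complex.exp (-(2 * Real.pi * Complex.I * j * n / M)) = z ^ j := by
    intro j
    rw [hz, ← Complex.exp_nat_mul]
    congr 1
    ring
  have hsum : ∑ j ∈ Finset.Icc 1 M, Complex.exp (-(2 * Real.pi * Complex.I * j * n / M)) =
      z * ∑ i ∈ Finset.range M, z ^ i := by
    rw [← Finset.Ico_add_one_right_eq_Icc, Finset.sum_Ico_eq_sum_range]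
    rw [Finset.mul_sum]
    refine Finset.sum_congr rfl fun i _ => ?_
    rw [hterm (1 + i), pow_add, pow_one]
  rw [hsum]
  by_cases hdvd : M ∣ n
  · obtain ⟨t, rfl⟩ := hdvd
    have hz1 : z = 1 := by
      rw [hz]
      have key : -(2 * Real.pi * Complex.I * ((M * t : ℕ) : ℂ) / (M : ℂ))
          = ((-(t : ℤ)) : ℂ) * (2 * Real.pi * Complex.I) := by
        push_cast
        field_simp
      rw [key]
      exact_mod_cast Complex.exp_int_mul_two_pi_mul_I (-(t : ℤ))
    simp [hz1]
  · have hz1 : z ≠ 1 := by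
      intro h
      rw [hz, Complex.exp_eq_one_iff] at h
      obtain ⟨k, hk⟩ := h
      apply hdvd
      have hpi : (2 * (Real.pi : ℂ) * Complex.I) ≠ 0 := by
        simp [Real.pi_ne_zero, Complex.I_ne_zero]
      field_simp at hk
      have h4 : (n : ℂ) + k * M = 0 := by
        refine mul_left_cancel₀ hpi ?_
        show 2 * (Real.pi:ℂ) * Complex.I * ((n : ℂ) + k * M) = 2 * (Real.pi:ℂ) * Complex.I * 0
        linear_combination (-(2 * (Real.pi:ℂ) * Complex.I)) * hk
      have h5 : ((n : ℤ) : ℂ) = (((-k) * M : ℤ) : ℂ) := by push_cast; linear_combination h4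
      have h6 : (n : ℤ) = (-k) * M := by exact_mod_cast h5
      have h7 : (M : ℤ) ∣ (n : ℤ) := ⟨-k, by rw [h6]; ring⟩
      exact_mod_cast h7
    have hzM : z ^ M = 1 := by
      rw [hz, ← Complex.exp_nat_mul]
      have key : (M : ℂ) * -(2 * Real.pi * Complex.I * n / M)
          = ((-(n : ℤ)) : ℂ) * (2 * Real.pi * Complex.I) := by
        push_cast
        field_simp
      rw [key]
      exact_mod_cast Complex.exp_int_mul_two_pi_mul_I (-(n : ℤ))
    rw [geom_sum_eq hz1, hzM]
    simp [hdvd]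

theorem stmt4 (s r : ℕ) (hs : 0 < s) (hr : 0 < r) (f : ℕ → ℂ)
    (hf : IsRSEven s r f) : IsRSEven s r (dft s r f) := by
  have hN : (r ^ s) ≠ 0 := (pow_pos hr s).ne'
  set N := r ^ s with hNdef
  set h : ℕ → ℂ := fun m => ∑ x ∈ m.divisorsAntidiagonal,
    ((ArithmeticFunction.moebius x.1 : ℤ) : ℂ) * f (x.2 ^ s) with hh
  have hsum : ∀ m : ℕ, 0 < m → ∑ d ∈ m.divisors, h d = f (m ^ s) := by
    intro m hm
    refine (ArithmeticFunction.sum_eq_iff_sum_smul_moebius_eq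
      (f := h) (g := fun m => f (m ^ s))).mpr ?_ m hm
    intro n hn
    simp only [hh, zsmul_eq_mul]
  have hpoint : ∀ k, f (ggcd s k N) = ∑ d ∈ r.divisors, (if d ^ s ∣ k then h d else 0) := by
    intro k
    obtain ⟨⟨c, hc⟩, hgk, hgN⟩ := ggcd_mem_s4 hs hN k
    have hc0 : c ≠ 0 := by
      intro h0; rw [h0, zero_pow hs.ne'] at hc
      exact hN (Nat.eq_zero_of_zero_dvd (hc ▸ hgN))
    have hcr : c ∣ r := (Nat.pow_dvd_pow_iff hs.ne').mp (hc ▸ hgN)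
    have hfil : r.divisors.filter (fun d => d ^ s ∣ k) = c.divisors := by
      ext d
      simp only [Finset.mem_filter, Nat.mem_divisors]
      constructor
      · rintro ⟨⟨hdr, -⟩, hdk⟩
        refine ⟨?_, hc0⟩
        have hd2 : d ^ s ∣ ggcd s k N :=
          (ggcd_dvd_iff hs hN k d).mpr ⟨hdk, pow_dvd_pow_of_dvd hdr s⟩
        exact (Nat.pow_dvd_pow_iff hs.ne').mp (hc ▸ hd2)
      · rintro ⟨hdc, -⟩
        exact ⟨⟨hdc.trans hcr, hr.ne'⟩, (pow_dvd_pow_of_dvd hdc s).trans (hc ▸ hgk)⟩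
    rw [← Finset.sum_filter, hfil, hsum c (Nat.pos_of_ne_zero hc0), ← hc]
  have key : ∀ n, dft s r f n = ∑ d ∈ r.divisors,
      h d * (if (r / d) ^ s ∣ n then ((((r / d) ^ s : ℕ)) : ℂ) else 0) := by
    intro n
    rw [dft]
    have step1 : ∑ k ∈ Finset.Icc 1 N,
        f k * Complex.exp (-(2 * Real.pi * Complex.I * k * n / ((r : ℂ) ^ s)))
        = ∑ d ∈ r.divisors, h d * ∑ k ∈ (Finset.Icc 1 N).filter (fun k => d ^ s ∣ k),
            Complex.exp (-(2 * Real.pi * Complex.I * k * n / ((r : ℂ) ^ s))) := by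
      calc ∑ k ∈ Finset.Icc 1 N,
            f k * Complex.exp (-(2 * Real.pi * Complex.I * k * n / ((r : ℂ) ^ s)))
          = ∑ k ∈ Finset.Icc 1 N, ∑ d ∈ r.divisors, (if d ^ s ∣ k then h d else 0) *
              Complex.exp (-(2 * Real.pi * Complex.I * k * n / ((r : ℂ) ^ s))) := by
            refine Finset.sum_congr rfl fun k _ => ?_
            rw [hf k, hpoint k, Finset.sum_mul]
        _ = ∑ d ∈ r.divisors, ∑ k ∈ Finset.Icc 1 N, (if d ^ s ∣ k then h d else 0) *
              Complex.exp (-(2 * Real.pi * Complex.I * k * n / ((r : ℂ) ^ s))) :=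
            Finset.sum_comm
        _ = ∑ d ∈ r.divisors, h d * ∑ k ∈ (Finset.Icc 1 N).filter (fun k => d ^ s ∣ k),
              Complex.exp (-(2 * Real.pi * Complex.I * k * n / ((r : ℂ) ^ s))) := by
            refine Finset.sum_congr rfl fun d _ => ?_
            rw [Finset.mul_sum, Finset.sum_filter]
            refine Finset.sum_congr rfl fun k _ => ?_
            by_cases hdk : d ^ s ∣ k <;> simp [hdk]
    rw [step1]
    refine Finset.sum_congr rfl fun d hd => ?_
    congr 1
    obtain ⟨hdr, -⟩ := Nat.mem_divisors.mp hd
    have hd0 : d ≠ 0 := fun h0 => hr.ne' (Nat.eq_zero_of_zero_dvd (h0 ▸ hdr))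
    set q := r / d with hq
    have hq0 : 0 < q := Nat.div_pos (Nat.le_of_dvd hr hdr) (Nat.pos_of_ne_zero hd0)
    have hrdq : d * q = r := Nat.mul_div_cancel' hdr
    have hds0 : 0 < d ^ s := pow_pos (Nat.pos_of_ne_zero hd0) s
    have hNeq : N = d ^ s * q ^ s := by rw [hNdef, ← hrdq, mul_pow]
    have himg : (Finset.Icc 1 N).filter (fun k => d ^ s ∣ k)
        = (Finset.Icc 1 (q ^ s)).image (fun j => d ^ s * j) := by
      ext k
      simp only [Finset.mem_filter, Finset.mem_Icc, Finset.mem_image]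
      constructor
      · rintro ⟨⟨h1, h2⟩, hdk⟩
        obtain ⟨j, rfl⟩ := hdk
        refine ⟨j, ⟨?_, ?_⟩, rfl⟩
        · rcases Nat.eq_zero_or_pos j with rfl | hj
          · simp at h1
          · exact hj
        · rw [hNeq] at h2
          exact Nat.le_of_mul_le_mul_left h2 hds0
      · rintro ⟨j, ⟨hj1, hj2⟩, rfl⟩
        refine ⟨⟨?_, ?_⟩, ⟨j, rfl⟩⟩
        · have : j ≠ 0 := by omega
          exact Nat.one_le_iff_ne_zero.mpr (by positivity)
        · rw [hNeq]
          exact Nat.mul_le_mul_left _ hj2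
    rw [himg, Finset.sum_image
      (fun j _ j' _ hjj => Nat.eq_of_mul_eq_mul_left hds0 hjj)]
    have hterm : ∀ j ∈ Finset.Icc 1 (q ^ s),
        Complex.exp (-(2 * Real.pi * Complex.I * ((d ^ s * j : ℕ) : ℂ) * n / ((r : ℂ) ^ s)))
        = Complex.exp (-(2 * Real.pi * Complex.I * j * n / ((q ^ s : ℕ) : ℂ))) := by
      intro j _
      congr 1
      have hr' : ((r : ℂ)) ^ s = ((d : ℂ)) ^ s * ((q : ℂ)) ^ s := by
        rw [← hrdq]; push_cast; ring
      have hdC : ((d : ℂ)) ^ s ≠ 0 := pow_ne_zero _ (Nat.cast_ne_zero.mpr hd0)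
      have hqC : ((q : ℂ)) ^ s ≠ 0 := pow_ne_zero _ (Nat.cast_ne_zero.mpr hq0.ne')
      rw [hr']
      push_cast
      field_simp
    rw [Finset.sum_congr rfl hterm, exp_sum (q ^ s) n (pow_pos hq0 s)]
  intro n
  rw [key n, key (ggcd s n N)]
  refine Finset.sum_congr rfl fun d hd => ?_
  have hdr : d ∣ r := (Nat.mem_divisors.mp hd).1
  have hMN : (r / d) ^ s ∣ N := pow_dvd_pow_of_dvd (Nat.div_dvd_of_dvd hdr) s
  have hiff : ((r / d) ^ s ∣ n) ↔ ((r / d) ^ s ∣ ggcd s n N) :=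
    ⟨fun hx => (ggcd_dvd_iff hs hN n (r / d)).mpr ⟨hx, hMN⟩,
     fun hx => hx.trans (ggcd_mem_s4 hs hN n).2.1⟩
  rw [if_congr hiff rfl rfl]
end

section
/- If f and g are (r,s)-even functions, then their Cauchy convolution (f ⊗ g)(n) = Σ_{k mod r^s} f(k) g(n−k) is also (r,s)-even. -/
open Finset

namespace Stmt10Aux

lemma gset_bdd {s b : ℕ} (hb : 0 < b) (a : ℕ) :
    BddAbove {m : ℕ | (∃ l : ℕ, m = l ^ s) ∧ m ∣ a ∧ m ∣ b} :=
  ⟨b, fun _ hm => Nat.le_of_dvd hb hm.2.2⟩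

lemma ggcd_mem {s b : ℕ} (hb : 0 < b) (a : ℕ) :
    (∃ l : ℕ, ggcd s a b = l ^ s) ∧ ggcd s a b ∣ a ∧ ggcd s a b ∣ b := by
  have h : ggcd s a b ∈ {m : ℕ | (∃ l : ℕ, m = l ^ s) ∧ m ∣ a ∧ m ∣ b} :=
    Nat.sSup_mem ⟨1, ⟨⟨1, (one_pow s).symm⟩, one_dvd _, one_dvd _⟩⟩ (gset_bdd hb a)
  exact h

lemma le_ggcd {s b : ℕ} (hb : 0 < b) {a m : ℕ} (h1 : ∃ l : ℕ, m = l ^ s)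
    (h2 : m ∣ a) (h3 : m ∣ b) : m ≤ ggcd s a b :=
  le_csSup (gset_bdd hb a) ⟨h1, h2, h3⟩

lemma ggcd_pos {s b : ℕ} (hb : 0 < b) (a : ℕ) : 0 < ggcd s a b :=
  lt_of_lt_of_le one_pos (le_ggcd hb ⟨1, (one_pow s).symm⟩ (one_dvd _) (one_dvd _))

lemma lcm_pow_dvd {a b : ℕ} (s : ℕ) (ha : a ≠ 0) (hb : b ≠ 0) :
    Nat.lcm a b ^ s ∣ Nat.lcm (a ^ s) (b ^ s) := by
  have hl : Nat.lcm a b ≠ 0 := Nat.lcm_ne_zero ha hb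
  have hl' : Nat.lcm (a ^ s) (b ^ s) ≠ 0 :=
    Nat.lcm_ne_zero (pow_ne_zero _ ha) (pow_ne_zero _ hb)
  rw [← Nat.factorization_le_iff_dvd (pow_ne_zero _ hl) hl']
  rw [Nat.factorization_pow, Nat.factorization_lcm ha hb,
    Nat.factorization_lcm (pow_ne_zero _ ha) (pow_ne_zero _ hb),
    Nat.factorization_pow, Nat.factorization_pow]
  intro p
  simp only [Finsupp.smul_apply, Finsupp.sup_apply, smul_eq_mul]
  rcases le_total (a.factorization p) (b.factorization p) with h | h <;>
    simp [sup_of_le_right, sup_of_le_left, Nat.max_eq_right, Nat.max_eq_left, h, Nat.mul_le_mul_left] <;> omega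


variable {s r : ℕ}

lemma dvd_ggcd (hs : 0 < s) (hr : 0 < r) {n e : ℕ} (h1 : e ^ s ∣ n) (h2 : e ^ s ∣ r ^ s) :
    e ^ s ∣ ggcd s n (r ^ s) := by
  have hN : 0 < r ^ s := pow_pos hr s
  obtain ⟨⟨l, hl⟩, hdn, hdN⟩ := ggcd_mem hN n
  have hg0 : 0 < ggcd s n (r ^ s) := ggcd_pos hN n
  have hl0 : l ≠ 0 := by
    rintro rfl
    rw [hl, zero_pow hs.ne'] at hg0; exact lt_irrefl 0 hg0
  have he0 : e ≠ 0 := by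
    rintro rfl
    rw [zero_pow hs.ne'] at h2
    exact absurd (Nat.eq_zero_of_zero_dvd h2) hN.ne'
  set L := Nat.lcm e l with hL
  have hLn : L ^ s ∣ n :=
    (lcm_pow_dvd s he0 hl0).trans (Nat.lcm_dvd h1 (hl ▸ hdn))
  have hLN : L ^ s ∣ r ^ s :=
    (lcm_pow_dvd s he0 hl0).trans (Nat.lcm_dvd h2 (hl ▸ hdN))
  have hle : L ^ s ≤ l ^ s := hl ▸ le_ggcd hN ⟨L, rfl⟩ hLn hLN
  have hLl : L = l := by
    have h1' : l ∣ L := Nat.dvd_lcm_right e l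
    have h2' : L ≤ l := (Nat.pow_le_pow_iff_left hs.ne').mp hle
    have hLpos : 0 < L := Nat.pos_of_ne_zero (Nat.lcm_ne_zero he0 hl0)
    exact le_antisymm h2' (Nat.le_of_dvd hLpos h1')
  have : e ∣ l := hLl ▸ Nat.dvd_lcm_left e l
  rw [hl]
  exact pow_dvd_pow_of_dvd this s

lemma ggcd_mod_inv (hr : 0 < r) {x y : ℕ} (h : x % r ^ s = y % r ^ s) :
    ggcd s x (r ^ s) = ggcd s y (r ^ s) := by
  have h' : Nat.ModEq (r ^ s) x y := h
  unfold ggcd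
  congr 1
  ext m
  simp only [Set.mem_setOf_eq]
  constructor
  · rintro ⟨hp, hx, hN⟩; exact ⟨hp, (h'.dvd_iff hN).mp hx, hN⟩
  · rintro ⟨hp, hy, hN⟩; exact ⟨hp, (h'.dvd_iff hN).mpr hy, hN⟩

lemma ggcd_idem (hs : 0 < s) (hr : 0 < r) (n : ℕ) :
    ggcd s (ggcd s n (r ^ s)) (r ^ s) = ggcd s n (r ^ s) := by
  have hN : 0 < r ^ s := pow_pos hr s
  obtain ⟨⟨l, hl⟩, hdn, hdN⟩ := ggcd_mem hN n
  apply le_antisymm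
  · obtain ⟨⟨l', hl'⟩, hdn', hdN'⟩ := ggcd_mem hN (ggcd s n (r ^ s))
    exact Nat.le_of_dvd (ggcd_pos hN n) hdn'
  · exact le_ggcd hN ⟨l, hl⟩ dvd_rfl hdN

/-- The `s`-th root of `ggcd s k (r^s)`. -/
noncomputable def rt (s r k : ℕ) : ℕ := sSup {l : ℕ | l ^ s = ggcd s k (r ^ s)}

lemma rt_spec (hs : 0 < s) (hr : 0 < r) (k : ℕ) :
    rt s r k ^ s = ggcd s k (r ^ s) ∧ rt s r k ∣ r := by
  have hN : 0 < r ^ s := pow_pos hr s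
  obtain ⟨⟨l, hl⟩, hdn, hdN⟩ := ggcd_mem hN k
  have hset : {l' : ℕ | l' ^ s = ggcd s k (r ^ s)} = {l} := by
    ext l'
    simp only [Set.mem_setOf_eq, Set.mem_singleton_iff]
    constructor
    · intro h; exact Nat.pow_left_injective hs.ne' (h.trans hl)
    · rintro rfl; exact hl.symm
  have hrt : rt s r k = l := by rw [rt, hset, csSup_singleton]
  refine ⟨by rw [hrt, ← hl], ?_⟩
  rw [hrt]
  exact (Nat.pow_dvd_pow_iff hs.ne').mp (hl ▸ hdN)

lemma rt_eq_iff (hs : 0 < s) (hr : 0 < r) (k l' : ℕ) :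
    rt s r k = l' ↔ ggcd s k (r ^ s) = l' ^ s := by
  constructor
  · rintro rfl; exact ((rt_spec hs hr k).1).symm
  · intro h
    exact Nat.pow_left_injective hs.ne' ((rt_spec hs hr k).1.trans h)


open Complex in
/-- Exponential kernel `e(x k / N)`. -/
noncomputable def B (N : ℕ) (x : ℤ) (k : ℕ) : ℂ :=
  Complex.exp (2 * Real.pi * Complex.I * x * k / N)

open Complex in
lemma geom_sum_B {M : ℕ} (hM : 0 < M) (a : ℤ) :
    ∑ j ∈ Icc 1 M, B M a j = if (M : ℤ) ∣ a then (M : ℂ) else 0 := by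
  have hM0 : (M : ℂ) ≠ 0 := Nat.cast_ne_zero.mpr hM.ne'
  set ζ : ℂ := Complex.exp (2 * Real.pi * Complex.I * a / M) with hζ
  have hpow : ∀ j : ℕ, B M a j = ζ ^ j := by
    intro j
    rw [hζ, ← Complex.exp_nat_mul, B]
    congr 1
    field_simp
  have hζM : ζ ^ M = 1 := by
    rw [← Complex.exp_nat_mul]
    have : (M : ℂ) * (2 * Real.pi * Complex.I * a / M) = a * (2 * Real.pi * Complex.I) := by
      field_simp
    rw [this]
    exact_mod_cast Complex.exp_int_mul_two_pi_mul_I a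
  by_cases hdvd : (M : ℤ) ∣ a
  · rw [if_pos hdvd]
    obtain ⟨c, hc⟩ := hdvd
    have hζ1 : ζ = 1 := by
      rw [hζ, hc]
      have heq : 2 * (Real.pi : ℂ) * Complex.I * (((M : ℤ) * c : ℤ) : ℂ) / M
          = (c : ℂ) * (2 * Real.pi * Complex.I) := by
        push_cast
        field_simp
      rw [heq]
      exact_mod_cast Complex.exp_int_mul_two_pi_mul_I c
    calc ∑ j ∈ Icc 1 M, B M a j = ∑ j ∈ Icc 1 M, (1 : ℂ) := by
          refine Finset.sum_congr rfl fun j _ => ?_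
          rw [hpow, hζ1, one_pow]
      _ = (M : ℂ) := by simp [Nat.card_Icc]
  · have hζ1 : ζ ≠ 1 := by
      intro h
      rw [hζ, Complex.exp_eq_one_iff] at h
      obtain ⟨c, hc⟩ := h
      apply hdvd
      refine ⟨c, ?_⟩
      have hπ : (2 * (Real.pi : ℂ) * Complex.I) ≠ 0 := by
        simp [Real.pi_ne_zero, Complex.I_ne_zero, Complex.ofReal_ne_zero]
      have h3 := (div_eq_iff hM0).mp hc
      have h2 : (a : ℂ) = (M : ℂ) * c := by
        apply mul_left_cancel₀ hπ
        linear_combination h3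
      exact_mod_cast h2
    have hsum0 : ∑ j ∈ Finset.range M, ζ ^ j = 0 := by
      rw [geom_sum_eq hζ1, hζM]
      simp
    simp only [hdvd, if_false]
    calc ∑ j ∈ Icc 1 M, B M a j = ∑ j ∈ Icc 1 M, ζ ^ j := Finset.sum_congr rfl fun j _ => hpow j
      _ = ∑ j ∈ Finset.range M, ζ ^ (1 + j) := by
          rw [show Icc 1 M = Finset.Ico 1 (M + 1) by rw [Finset.Ico_add_one_right_eq_Icc],
            Finset.sum_Ico_eq_sum_range]
          simp
      _ = ζ * ∑ j ∈ Finset.range M, ζ ^ j := by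
          rw [Finset.mul_sum]
          exact Finset.sum_congr rfl fun j _ => by rw [pow_add, pow_one]
      _ = 0 := by rw [hsum0, mul_zero]

lemma sum_delta {N : ℕ} (hN : 0 < N) (G : ℕ → ℂ)
    (hG : ∀ x y : ℕ, x % N = y % N → G x = G y) (x : ℕ) :
    ∑ b ∈ Icc 1 N, (if (N : ℤ) ∣ ((x : ℤ) - b) then G b else 0) = G x := by
  set b₀ := if x % N = 0 then N else x % N with hb₀
  have hb₀mem : b₀ ∈ Icc 1 N := by
    rw [hb₀]
    split_ifs with h
    · exact Finset.mem_Icc.mpr ⟨hN, le_refl N⟩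
    · simp only [Finset.mem_Icc]
      exact ⟨Nat.one_le_iff_ne_zero.mpr h, le_of_lt (Nat.mod_lt x hN)⟩
  have hmod : b₀ % N = x % N := by
    rw [hb₀]
    split_ifs with h
    · simp [h]
    · exact Nat.mod_mod_of_dvd x dvd_rfl
  have hdvd0 : (N : ℤ) ∣ ((x : ℤ) - b₀) := (Nat.ModEq.dvd (hmod : Nat.ModEq N b₀ x))
  rw [Finset.sum_eq_single_of_mem b₀ hb₀mem]
  · simp only [hdvd0, if_true]
    exact hG b₀ x hmod
  · intro b hb hne
    rw [if_neg]
    intro hdvd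
    apply hne
    have h1 : (N : ℤ) ∣ ((b : ℤ) - b₀) := by
      have := dvd_sub hdvd0 hdvd
      rw [show (x : ℤ) - b₀ - ((x : ℤ) - b) = (b : ℤ) - b₀ by ring] at this
      exact this
    simp only [Finset.mem_Icc] at hb hb₀mem
    obtain ⟨c, hc⟩ := h1
    have hb1 : (1 : ℤ) ≤ b := by exact_mod_cast hb.1
    have hb2 : (b : ℤ) ≤ N := by exact_mod_cast hb.2
    have hb01 : (1 : ℤ) ≤ b₀ := by exact_mod_cast hb₀mem.1
    have hb02 : (b₀ : ℤ) ≤ N := by exact_mod_cast hb₀mem.2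
    have hNz : (0 : ℤ) < N := by exact_mod_cast hN
    have hlow : -(N : ℤ) < (N : ℤ) * c := by rw [← hc]; omega
    have hhigh : (N : ℤ) * c < N := by rw [← hc]; omega
    have hc1 : (-1 : ℤ) < c := by nlinarith
    have hc2 : c < 1 := by nlinarith
    have hc0 : c = 0 := by omega
    subst hc0
    rw [mul_zero] at hc
    have : (b : ℤ) = b₀ := by omega
    exact_mod_cast this


lemma B_scale {N M c : ℕ} (hc : 0 < c) (hM : 0 < M) (hNf : N = c * M) (a : ℤ) (j : ℕ) :
    B N a (c * j) = B M a j := by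
  unfold B
  subst hNf
  congr 1
  have hc0 : (c : ℂ) ≠ 0 := Nat.cast_ne_zero.mpr hc.ne'
  have hM0 : (M : ℂ) ≠ 0 := Nat.cast_ne_zero.mpr hM.ne'
  push_cast
  field_simp

lemma T_eq (hs : 0 < s) (hr : 0 < r) {l : ℕ} (hl : l ∣ r) (a : ℤ) :
    ∑ k ∈ (Icc 1 (r ^ s)).filter (fun k => l ^ s ∣ k), B (r ^ s) a k
      = if (((r / l) ^ s : ℕ) : ℤ) ∣ a then (((r / l) ^ s : ℕ) : ℂ) else 0 := by
  have hlpos : 0 < l := Nat.pos_of_dvd_of_pos hl hr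
  have hlspos : 0 < l ^ s := pow_pos hlpos s
  have hMpos : 0 < (r / l) ^ s := pow_pos (Nat.div_pos (Nat.le_of_dvd hr hl) hlpos) s
  have hfact : r ^ s = l ^ s * (r / l) ^ s := by rw [← mul_pow, Nat.mul_div_cancel' hl]
  rw [← geom_sum_B hMpos a]
  refine Finset.sum_nbij' (fun k => k / l ^ s) (fun j => l ^ s * j) ?_ ?_ ?_ ?_ ?_
  · intro k hk
    simp only [Finset.mem_filter, Finset.mem_Icc] at hk
    obtain ⟨⟨hk1, hk2⟩, hdvd⟩ := hk
    simp only [Finset.mem_Icc]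
    constructor
    · exact Nat.one_le_div_iff hlspos |>.mpr (Nat.le_of_dvd (by omega) hdvd)
    · rw [Nat.div_le_iff_le_mul_add_pred hlspos]
      calc k ≤ r ^ s := hk2
        _ = l ^ s * (r / l) ^ s := hfact
        _ ≤ l ^ s * (r / l) ^ s + (l ^ s - 1) := Nat.le_add_right _ _
  · intro j hj
    simp only [Finset.mem_Icc] at hj
    simp only [Finset.mem_filter, Finset.mem_Icc]
    refine ⟨⟨?_, ?_⟩, Dvd.intro j rfl⟩
    · exact Nat.mul_pos hlspos hj.1
    · rw [hfact]
      exact Nat.mul_le_mul_left _ hj.2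
  · intro k hk
    simp only [Finset.mem_filter] at hk
    exact Nat.mul_div_cancel' hk.2
  · intro j _
    exact Nat.mul_div_cancel_left j hlspos
  · intro k hk
    simp only [Finset.mem_filter] at hk
    obtain ⟨-, hdvd⟩ := hk
    obtain ⟨j, rfl⟩ := hdvd
    simp only [Nat.mul_div_cancel_left j hlspos]
    exact B_scale hlspos hMpos hfact a j

lemma partition_sum (hs : 0 < s) (hr : 0 < r) {l : ℕ} (hl : l ∣ r) (term : ℕ → ℂ) :
    ∑ k ∈ (Icc 1 (r ^ s)).filter (fun k => l ^ s ∣ k), term k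
      = ∑ l' ∈ r.divisors.filter (fun l' => l ∣ l'),
          ∑ k ∈ (Icc 1 (r ^ s)).filter (fun k => rt s r k = l'), term k := by
  have hN : 0 < r ^ s := pow_pos hr s
  have hmaps : ∀ k ∈ (Icc 1 (r ^ s)).filter (fun k => l ^ s ∣ k),
      rt s r k ∈ r.divisors.filter (fun l' => l ∣ l') := by
    intro k hk
    simp only [Finset.mem_filter] at hk ⊢
    refine ⟨Nat.mem_divisors.mpr ⟨(rt_spec hs hr k).2, hr.ne'⟩, ?_⟩
    have h1 : l ^ s ∣ ggcd s k (r ^ s) :=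
      dvd_ggcd hs hr hk.2 (pow_dvd_pow_of_dvd hl s)
    rw [← (rt_spec hs hr k).1] at h1
    exact (Nat.pow_dvd_pow_iff hs.ne').mp h1
  rw [← Finset.sum_fiberwise_of_maps_to hmaps term]
  refine Finset.sum_congr rfl fun l' hl' => ?_
  simp only [Finset.mem_filter, Nat.mem_divisors] at hl'
  congr 1
  ext k
  simp only [Finset.mem_filter, Finset.mem_Icc]
  constructor
  · rintro ⟨⟨hk, _⟩, hrt⟩; exact ⟨hk, hrt⟩
  · rintro ⟨hk, hrt⟩
    refine ⟨⟨hk, ?_⟩, hrt⟩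
    have h2 : l' ^ s ∣ k := by
      have hspec := (rt_spec hs hr k).1
      rw [hrt] at hspec
      exact hspec ▸ (ggcd_mem hN k).2.1
    exact (pow_dvd_pow_of_dvd hl'.2 s).trans h2

/-- Sum of the kernel over a `ggcd`-class. -/
noncomputable def Sl (s r : ℕ) (a : ℤ) (l : ℕ) : ℂ :=
  ∑ k ∈ (Icc 1 (r ^ s)).filter (fun k => rt s r k = l), B (r ^ s) a k

lemma key (hs : 0 < s) (hr : 0 < r) (t : ℤ) (ht : t = 1 ∨ t = -1) (F : ℕ → ℂ)
    (hF : ∀ m, F m = F (ggcd s m (r ^ s))) {n n' : ℕ}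
    (hnn : ggcd s n (r ^ s) = ggcd s n' (r ^ s)) :
    ∑ k ∈ Icc 1 (r ^ s), F k * B (r ^ s) (t * n) k
      = ∑ k ∈ Icc 1 (r ^ s), F k * B (r ^ s) (t * n') k := by
  have hN : 0 < r ^ s := pow_pos hr s
  -- divisibility transfer
  have hdvdtrans : ∀ l : ℕ, l ∣ r →
      ((((r / l) ^ s : ℕ) : ℤ) ∣ t * n ↔ (((r / l) ^ s : ℕ) : ℤ) ∣ t * n') := by
    intro l hl
    have base : ∀ m : ℕ, ((r / l) ^ s ∣ m ↔ (r / l) ^ s ∣ ggcd s m (r ^ s)) := fun m =>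
      ⟨fun h => dvd_ggcd hs hr h (pow_dvd_pow_of_dvd (Nat.div_dvd_of_dvd hl) s),
       fun h => h.trans (ggcd_mem hN m).2.1⟩
    have hnat : (r / l) ^ s ∣ n ↔ (r / l) ^ s ∣ n' := by rw [base n, base n', hnn]
    rcases ht with rfl | rfl
    · simpa only [one_mul, Int.natCast_dvd_natCast] using hnat
    · simp only [neg_mul, one_mul, dvd_neg, Int.natCast_dvd_natCast]
      exact hnat
  -- T sums agree
  have hT : ∀ l : ℕ, l ∣ r →
      ∑ k ∈ (Icc 1 (r ^ s)).filter (fun k => l ^ s ∣ k), B (r ^ s) (t * n) k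
        = ∑ k ∈ (Icc 1 (r ^ s)).filter (fun k => l ^ s ∣ k), B (r ^ s) (t * n') k := by
    intro l hl
    rw [T_eq hs hr hl, T_eq hs hr hl]
    exact if_congr (hdvdtrans l hl) rfl rfl
  -- S sums agree, by downward strong induction
  have hS : ∀ m : ℕ, ∀ l : ℕ, l ∣ r → r / l ≤ m →
      Sl s r (t * n) l = Sl s r (t * n') l := by
    intro m
    induction m with
    | zero =>
      intro l hl h0
      have hlpos : 0 < l := Nat.pos_of_dvd_of_pos hl hr
      have : 0 < r / l := Nat.div_pos (Nat.le_of_dvd hr hl) hlpos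
      omega
    | succ m ih =>
      intro l hl hle
      have hpart_n := partition_sum hs hr hl (B (r ^ s) (t * n))
      have hpart_n' := partition_sum hs hr hl (B (r ^ s) (t * n'))
      have hlmem : l ∈ r.divisors.filter (fun l' => l ∣ l') := by
        simp [Nat.mem_divisors, hl, hr.ne']
      rw [← Finset.add_sum_erase _ _ hlmem] at hpart_n hpart_n'
      have hTl := hT l hl
      have herase : ∀ l' ∈ (r.divisors.filter (fun l' => l ∣ l')).erase l,
          Sl s r (t * n) l' = Sl s r (t * n') l' := by
        intro l' hl'
        rw [Finset.mem_erase, Finset.mem_filter, Nat.mem_divisors] at hl'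
        obtain ⟨hne, ⟨hl'r, -⟩, hll'⟩ := hl'
        have hlpos : 0 < l := Nat.pos_of_dvd_of_pos hl hr
        have hl'pos : 0 < l' := Nat.pos_of_dvd_of_pos hl'r hr
        have hltl' : l < l' := lt_of_le_of_ne (Nat.le_of_dvd hl'pos hll') (Ne.symm hne)
        have hdivlt : r / l' < r / l := by
          have ha : r / l * l = r := Nat.div_mul_cancel hl
          have hb : r / l' * l' = r := Nat.div_mul_cancel hl'r
          have hapos : 0 < r / l := Nat.div_pos (Nat.le_of_dvd hr hl) hlpos
          by_contra hcon
          push_neg at hcon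
          have hcontr : r < r := by
            calc r = r / l * l := ha.symm
              _ < r / l * l' := by
                  exact mul_lt_mul_of_pos_left hltl' hapos
              _ ≤ r / l' * l' := Nat.mul_le_mul_right _ hcon
              _ = r := hb
          exact lt_irrefl r hcontr
        exact ih l' hl'r (by omega)
      have hsum_erase :
          ∑ l' ∈ (r.divisors.filter (fun l' => l ∣ l')).erase l, Sl s r (t * n) l'
            = ∑ l' ∈ (r.divisors.filter (fun l' => l ∣ l')).erase l, Sl s r (t * n') l' :=
        Finset.sum_congr rfl herase
      simp only [Sl] at hsum_erase ⊢
      linear_combination hTl - hpart_n + hpart_n' - hsum_erase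
  -- final grouping
  have hall : (Icc 1 (r ^ s)).filter (fun k => (1 : ℕ) ^ s ∣ k) = Icc 1 (r ^ s) := by
    simp
  have hgroup : ∀ x : ℕ,
      ∑ k ∈ Icc 1 (r ^ s), F k * B (r ^ s) (t * x) k
        = ∑ l' ∈ r.divisors.filter (fun l' => (1 : ℕ) ∣ l'),
            F (l' ^ s) * Sl s r (t * x) l' := by
    intro x
    rw [← hall, partition_sum hs hr (one_dvd r) (fun k => F k * B (r ^ s) (t * x) k)]
    refine Finset.sum_congr rfl fun l' hl' => ?_
    rw [Sl, Finset.mul_sum]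
    refine Finset.sum_congr rfl fun k hk => ?_
    rw [Finset.mem_filter] at hk
    have : F k = F (l' ^ s) := by
      rw [hF k, ← (rt_spec hs hr k).1, hk.2]
    rw [this]
  rw [hgroup n, hgroup n']
  refine Finset.sum_congr rfl fun l' hl' => ?_
  rw [Finset.mem_filter, Nat.mem_divisors] at hl'
  rw [hS r l' hl'.1.1 (Nat.div_le_self r l')]


lemma B_combine (N : ℕ) (a b x m : ℕ) :
    (B N ((-1) * (m : ℤ)) a * B N ((-1) * (m : ℤ)) b) * B N (1 * (x : ℤ)) m
      = B N ((x : ℤ) - a - b) m := by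
  unfold B
  rw [← Complex.exp_add, ← Complex.exp_add]
  rw [← add_div, ← add_div]
  congr 1
  push_cast
  ring

/-- The DFT building block. -/
noncomputable def Dtrans (s r : ℕ) (f : ℕ → ℂ) (m : ℕ) : ℂ :=
  ∑ a ∈ Icc 1 (r ^ s), f a * B (r ^ s) ((-1) * (m : ℤ)) a

lemma Dtrans_even (hs : 0 < s) (hr : 0 < r) (f : ℕ → ℂ)
    (hf : ∀ m, f m = f (ggcd s m (r ^ s))) (m : ℕ) :
    Dtrans s r f m = Dtrans s r f (ggcd s m (r ^ s)) :=
  key hs hr (-1) (Or.inr rfl) f hf ((ggcd_idem hs hr m).symm)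

lemma inversion (hs : 0 < s) (hr : 0 < r) (f g : ℕ → ℂ)
    (hg : ∀ m, g m = g (ggcd s m (r ^ s))) (x : ℕ) :
    ∑ k ∈ Icc 1 (r ^ s), f k * g (x + r ^ s - k)
      = (1 / ((r ^ s : ℕ) : ℂ)) * ∑ m ∈ Icc 1 (r ^ s),
          (Dtrans s r f m * Dtrans s r g m) * B (r ^ s) (1 * (x : ℤ)) m := by
  have hN : 0 < r ^ s := pow_pos hr s
  have hN0 : ((r ^ s : ℕ) : ℂ) ≠ 0 := Nat.cast_ne_zero.mpr hN.ne'
  have hGmod : ∀ u v : ℕ, u % r ^ s = v % r ^ s → g u = g v := fun u v h => by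
    rw [hg u, hg v, ggcd_mod_inv hr h]
  symm
  calc (1 / ((r ^ s : ℕ) : ℂ)) * ∑ m ∈ Icc 1 (r ^ s),
          (Dtrans s r f m * Dtrans s r g m) * B (r ^ s) (1 * (x : ℤ)) m
      = (1 / ((r ^ s : ℕ) : ℂ)) * ∑ m ∈ Icc 1 (r ^ s), ∑ a ∈ Icc 1 (r ^ s),
          ∑ b ∈ Icc 1 (r ^ s), (f a * g b) * B (r ^ s) ((x : ℤ) - a - b) m := by
        congr 1
        refine Finset.sum_congr rfl fun m _ => ?_
        rw [Dtrans, Dtrans, Finset.sum_mul_sum, Finset.sum_mul]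
        refine Finset.sum_congr rfl fun a _ => ?_
        rw [Finset.sum_mul]
        refine Finset.sum_congr rfl fun b _ => ?_
        rw [← B_combine (r ^ s) a b x m]
        ring
    _ = (1 / ((r ^ s : ℕ) : ℂ)) * ∑ a ∈ Icc 1 (r ^ s), ∑ b ∈ Icc 1 (r ^ s),
          (f a * g b) * (if ((r ^ s : ℕ) : ℤ) ∣ ((x : ℤ) - a - b) then ((r ^ s : ℕ) : ℂ) else 0) := by
        congr 1
        rw [Finset.sum_comm]
        refine Finset.sum_congr rfl fun a _ => ?_
        rw [Finset.sum_comm]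
        refine Finset.sum_congr rfl fun b _ => ?_
        rw [← Finset.mul_sum, geom_sum_B hN]
    _ = ∑ k ∈ Icc 1 (r ^ s), f k * g (x + r ^ s - k) := by
        rw [Finset.mul_sum]
        refine Finset.sum_congr rfl fun a ha => ?_
        rw [Finset.mem_Icc] at ha
        have hcast : ((x + r ^ s - a : ℕ) : ℤ) = (x : ℤ) + (r : ℤ) ^ s - a := by
          have h1 : a ≤ x + r ^ s := le_trans ha.2 (Nat.le_add_left _ _)
          rw [Nat.cast_sub h1]
          push_cast
          ring
        have hb : ∀ b : ℕ, (((r ^ s : ℕ) : ℤ) ∣ ((x : ℤ) - a - b))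
            ↔ (((r ^ s : ℕ) : ℤ) ∣ (((x + r ^ s - a : ℕ) : ℤ) - b)) := by
          intro b
          rw [hcast]
          constructor
          · intro h
            have h2 := dvd_add h (dvd_refl ((r ^ s : ℕ) : ℤ))
            convert h2 using 1
            · rfl
            · push_cast
              ring
          · intro h
            have h2 := dvd_sub h (dvd_refl ((r ^ s : ℕ) : ℤ))
            convert h2 using 1
            · rfl
            · push_cast
              ring
        have hstep : ∑ b ∈ Icc 1 (r ^ s), (f a * g b) *
              (if ((r ^ s : ℕ) : ℤ) ∣ ((x : ℤ) - a - b) then ((r ^ s : ℕ) : ℂ) else 0)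
            = f a * ((r ^ s : ℕ) : ℂ) * ∑ b ∈ Icc 1 (r ^ s),
              (if ((r ^ s : ℕ) : ℤ) ∣ (((x + r ^ s - a : ℕ) : ℤ) - b) then g b else 0) := by
          rw [Finset.mul_sum]
          refine Finset.sum_congr rfl fun b _ => ?_
          by_cases hP : ((r ^ s : ℕ) : ℤ) ∣ ((x : ℤ) - a - b)
          · rw [if_pos hP, if_pos ((hb b).mp hP)]; ring
          · rw [if_neg hP, if_neg (fun h => hP ((hb b).mpr h))]; ring
        rw [hstep, sum_delta hN g hGmod (x + r ^ s - a)]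
        calc (1 / ((r ^ s : ℕ) : ℂ)) * (f a * ((r ^ s : ℕ) : ℂ) * g (x + r ^ s - a))
            = (f a * g (x + r ^ s - a)) * (((r ^ s : ℕ) : ℂ) * (1 / ((r ^ s : ℕ) : ℂ))) := by
              ring
          _ = f a * g (x + r ^ s - a) := by
              rw [mul_one_div, div_self hN0, mul_one]

end Stmt10Aux

theorem stmt10 (s r : ℕ) (hs : 0 < s) (hr : 0 < r) (f g : ℕ → ℂ)
    (hf : IsRSEven s r f) (hg : IsRSEven s r g) :
    IsRSEven s r (fun n => ∑ k ∈ Finset.Icc 1 (r ^ s), f k * g (n + r ^ s - k)) := by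
  intro n
  simp only
  rw [Stmt10Aux.inversion hs hr f g hg n,
    Stmt10Aux.inversion hs hr f g hg (ggcd s n (r ^ s))]
  congr 1
  exact Stmt10Aux.key hs hr 1 (Or.inl rfl)
    (fun m => Stmt10Aux.Dtrans s r f m * Stmt10Aux.Dtrans s r g m)
    (fun m => by
      rw [Stmt10Aux.Dtrans_even hs hr f hf m, Stmt10Aux.Dtrans_even hs hr g hg m])
    ((Stmt10Aux.ggcd_idem hs hr n).symm)
end

section
/- The number N_{r,s}(n,k) of solutions (x_1,...,x_k) modulo r^s of the congruence x_1 + ... + x_k ≡ n (mod r^s) subject to (x_i, r^s)_s = 1 for all i equals (1/r^s) Σ_{d | r} (c_{r,s}((r/d)^s))^k · c_{d,s}(n). -/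
open Finset

open ArithmeticFunction
open scoped ArithmeticFunction.Moebius

lemma gcd_pow (a b s : ℕ) (hs : s ≠ 0) : Nat.gcd (a^s) (b^s) = Nat.gcd a b ^ s := by
  rcases Nat.eq_zero_or_pos (Nat.gcd a b) with g0 | g0
  · obtain rfl := Nat.eq_zero_of_gcd_eq_zero_left g0
    obtain rfl := Nat.eq_zero_of_gcd_eq_zero_right g0
    simp [zero_pow hs]
  obtain ⟨g, a', b', hg, co, rfl, rfl⟩ := Nat.exists_coprime' g0
  rw [mul_pow, mul_pow, Nat.gcd_mul_right, Nat.gcd_mul_right, (co.pow s s).gcd_eq_one,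
    co.gcd_eq_one, one_mul, one_mul]

lemma lcm_pow (a b s : ℕ) (hs : s ≠ 0) : Nat.lcm (a^s) (b^s) = Nat.lcm a b ^ s := by
  rcases Nat.eq_zero_or_pos (Nat.gcd a b) with g0 | g0
  · obtain rfl := Nat.eq_zero_of_gcd_eq_zero_left g0
    obtain rfl := Nat.eq_zero_of_gcd_eq_zero_right g0
    simp [zero_pow hs, Nat.lcm]
  have h1 : Nat.gcd (a^s) (b^s) * Nat.lcm (a^s) (b^s) = Nat.gcd a b ^ s * Nat.lcm a b ^ s := by
    rw [Nat.gcd_mul_lcm, ← mul_pow, ← mul_pow, Nat.gcd_mul_lcm]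
  rw [gcd_pow a b s hs] at h1
  exact Nat.eq_of_mul_eq_mul_left (pow_pos g0 s) h1

/-- Structure of `ggcd s j (d^s)` for `j > 0`. -/
lemma ggcd_spec {s : ℕ} (hs : 0 < s) (j d : ℕ) (hj : 0 < j) :
    ∃ e, e ∣ d ∧ e ^ s ∣ j ∧ ggcd s j (d ^ s) = e ^ s ∧
      ∀ l, l ∣ d → l ^ s ∣ j → l ∣ e := by
  set S : Set ℕ := {m : ℕ | (∃ l : ℕ, m = l ^ s) ∧ m ∣ j ∧ m ∣ d ^ s} with hS
  have h1 : 1 ∈ S := ⟨⟨1, (one_pow s).symm⟩, one_dvd _, one_dvd _⟩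
  have hbdd : BddAbove S := ⟨j, fun m hm => Nat.le_of_dvd hj hm.2.1⟩
  have hmem : sSup S ∈ S := Nat.sSup_mem ⟨1, h1⟩ hbdd
  obtain ⟨⟨e, he⟩, hjd, hdd⟩ := hmem
  have hed : e ∣ d := (Nat.pow_dvd_pow_iff hs.ne').mp (he ▸ hdd)
  have hej : e ^ s ∣ j := he ▸ hjd
  refine ⟨e, hed, hej, he, fun l hl hlj => ?_⟩
  have hl0 : 0 < l := by
    rcases Nat.eq_zero_or_pos l with rfl | h
    · rw [zero_pow hs.ne', zero_dvd_iff] at hlj; omega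
    · exact h
  have he0 : 0 < e := by
    rcases Nat.eq_zero_or_pos e with rfl | h
    · rw [zero_pow hs.ne', zero_dvd_iff] at hej; omega
    · exact h
  set f := Nat.lcm l e with hf
  have hfd : f ∣ d := Nat.lcm_dvd hl hed
  have hfj : f ^ s ∣ j := by
    rw [hf, ← lcm_pow _ _ _ hs.ne']
    exact Nat.lcm_dvd hlj hej
  have hfS : f ^ s ∈ S := ⟨⟨f, rfl⟩, hfj, pow_dvd_pow_of_dvd hfd s⟩
  have hle : f ^ s ≤ e ^ s := he ▸ le_csSup hbdd hfS
  have hef : e ∣ f := Nat.dvd_lcm_right l e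
  have hge : e ^ s ≤ f ^ s := Nat.pow_le_pow_left (Nat.le_of_dvd (Nat.lcm_pos hl0 he0) hef) s
  have : f = e := Nat.pow_left_injective hs.ne' (le_antisymm hle hge)
  exact this ▸ Nat.dvd_lcm_left l e

lemma pow_dvd_ggcd_iff {s : ℕ} (hs : 0 < s) {j d : ℕ} (hj : 0 < j) (l : ℕ) :
    l ^ s ∣ ggcd s j (d ^ s) ↔ l ∣ d ∧ l ^ s ∣ j := by
  obtain ⟨e, hed, hej, hgg, hmax⟩ := ggcd_spec hs j d hj
  rw [hgg]
  constructor
  · intro h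
    have hle : l ∣ e := (Nat.pow_dvd_pow_iff hs.ne').mp h
    exact ⟨hle.trans hed, (pow_dvd_pow_of_dvd hle s).trans hej⟩
  · rintro ⟨h1, h2⟩
    exact pow_dvd_pow_of_dvd (hmax l h1 h2) s

lemma ggcd_eq_one_iff {s : ℕ} (hs : 0 < s) {j d : ℕ} (hj : 0 < j) :
    ggcd s j (d ^ s) = 1 ↔ ∀ l, l ∣ d → l ^ s ∣ j → l = 1 := by
  obtain ⟨e, hed, hej, hgg, hmax⟩ := ggcd_spec hs j d hj
  rw [hgg]
  constructor
  · intro h l h1 h2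
    have he1 : e = 1 := by
      have h' : e ^ s = 1 ^ s := by rw [h, one_pow]
      exact Nat.pow_left_injective hs.ne' h'
    exact Nat.dvd_one.mp (he1 ▸ hmax l h1 h2)
  · intro h
    rw [h e hed hej, one_pow]

lemma ggcd_zero_left (s b : ℕ) : ggcd s 0 b = ggcd s b b := by
  unfold ggcd
  congr 1
  ext m
  simp

noncomputable def E (m : ℕ) (a : ℤ) : ℂ := Complex.exp (2 * Real.pi * Complex.I * a / m)

lemma E_add (m : ℕ) (a b : ℤ) : E m (a + b) = E m a * E m b := by
  rw [E, E, E, ← Complex.exp_add]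
  congr 1
  push_cast
  ring

lemma E_zero (m : ℕ) : E m 0 = 1 := by simp [E]

lemma E_pow (m : ℕ) (a : ℤ) (t : ℕ) : E m ((t : ℤ) * a) = E m a ^ t := by
  rw [E, E, ← Complex.exp_nat_mul]
  congr 1
  push_cast
  ring

lemma E_eq_one_iff {m : ℕ} (hm : 0 < m) (a : ℤ) : E m a = 1 ↔ (m : ℤ) ∣ a := by
  rw [E, Complex.exp_eq_one_iff]
  constructor
  · rintro ⟨n, hn⟩
    refine ⟨n, ?_⟩
    have hm' : (m : ℂ) ≠ 0 := Nat.cast_ne_zero.mpr hm.ne'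
    have h2 : (2 * Real.pi * Complex.I : ℂ) ≠ 0 := by
      simp [Real.pi_ne_zero, Complex.I_ne_zero]
    field_simp at hn
    have : (a : ℂ) = (m : ℂ) * n := by
      apply mul_left_cancel₀ h2
      rw [hn]
    exact_mod_cast this
  · rintro ⟨c, rfl⟩
    refine ⟨c, ?_⟩
    have hm' : (m : ℂ) ≠ 0 := Nat.cast_ne_zero.mpr hm.ne'
    field_simp
    push_cast
    ring

lemma E_period {m : ℕ} (hm : 0 < m) {a b : ℤ} (h : a ≡ b [ZMOD m]) : E m a = E m b := by
  have hd : (m : ℤ) ∣ a - b := Int.ModEq.dvd h.symm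
  have : E m (b + (a - b)) = E m b * E m (a - b) := E_add m b (a - b)
  rw [(E_eq_one_iff hm _).mpr hd, mul_one] at this
  rw [show b + (a - b) = a by ring] at this
  exact this

lemma E_ortho {m : ℕ} (hm : 0 < m) (a : ℤ) :
    ∑ t ∈ range m, E m ((t : ℤ) * a) = if (m : ℤ) ∣ a then (m : ℂ) else 0 := by
  by_cases h : (m : ℤ) ∣ a
  · simp only [h, if_true]
    have h1 : E m a = 1 := (E_eq_one_iff hm a).mpr h
    calc ∑ t ∈ range m, E m ((t : ℤ) * a) = ∑ t ∈ range m, 1 := by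
          refine Finset.sum_congr rfl fun t _ => ?_
          rw [E_pow, h1, one_pow]
      _ = m := by simp
  · simp only [h, if_false]
    have h1 : E m a ≠ 1 := fun hc => h ((E_eq_one_iff hm a).mp hc)
    have h2 : E m a ^ m = 1 := by
      rw [← E_pow, E_eq_one_iff hm]
      exact Dvd.intro a rfl
    calc ∑ t ∈ range m, E m ((t : ℤ) * a) = ∑ t ∈ range m, E m a ^ t := by
          exact Finset.sum_congr rfl fun t _ => E_pow m a t
      _ = (E m a ^ m - 1) / (E m a - 1) := geom_sum_eq h1 m
      _ = 0 := by rw [h2]; simp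

lemma E_mul_cancel {u : ℕ} (hu : u ≠ 0) (M : ℕ) (w : ℤ) :
    E (u * M) ((u : ℤ) * w) = E M w := by
  rw [E, E]
  congr 1
  have hu' : (u : ℂ) ≠ 0 := Nat.cast_ne_zero.mpr hu
  rcases Nat.eq_zero_or_pos M with rfl | hM
  · push_cast; rw [mul_zero]; simp
  have hM' : (M : ℂ) ≠ 0 := Nat.cast_ne_zero.mpr hM.ne'
  field_simp
  push_cast
  ring

lemma sum_range_eq_sum_Icc {M : ℕ} (hM : 0 < M) (f : ℕ → ℂ) (h : f 0 = f M) :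
    ∑ j ∈ range M, f j = ∑ j ∈ Icc 1 M, f j := by
  have h1 : ∑ j ∈ range M, f j = f 0 + ∑ j ∈ Ico 1 M, f j := by
    rw [Finset.range_eq_Ico, Finset.sum_eq_sum_Ico_succ_bot hM]
  have h2 : ∑ j ∈ Icc 1 M, f j = ∑ j ∈ Ico 1 M, f j + f M := by
    rw [← Finset.Ico_add_one_right_eq_Icc, Finset.sum_Ico_succ_top hM]
  rw [h1, h2, h, add_comm]

lemma moebius_sum (n : ℕ) :
    (∑ d ∈ n.divisors, (μ d : ℤ)) = if n = 1 then 1 else 0 := by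
  have h := congrArg (fun f : ArithmeticFunction ℤ => f n) moebius_mul_coe_zeta
  simp only [coe_mul_zeta_apply, one_apply] at h
  simpa using h

lemma indicator_moebius {s : ℕ} (hs : 0 < s) {d j : ℕ} (hd : 0 < d) (hj : 0 < j) :
    (if ggcd s j (d ^ s) = 1 then (1 : ℂ) else 0)
      = ∑ l ∈ d.divisors, if l ^ s ∣ j then (μ l : ℂ) else 0 := by
  obtain ⟨e, hed, hej, hgg, hmax⟩ := ggcd_spec hs j d hj
  have he0 : e ≠ 0 := by
    rintro rfl
    rw [zero_pow hs.ne', zero_dvd_iff] at hej; omega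
  have hfilter : d.divisors.filter (fun l => l ^ s ∣ j) = e.divisors := by
    ext l
    simp only [Finset.mem_filter, Nat.mem_divisors]
    constructor
    · rintro ⟨⟨h1, _⟩, h2⟩
      exact ⟨hmax l h1 h2, he0⟩
    · rintro ⟨h1, _⟩
      exact ⟨⟨h1.trans hed, hd.ne'⟩, (pow_dvd_pow_of_dvd h1 s).trans hej⟩
  rw [Finset.sum_ite, Finset.sum_const_zero, add_zero, hfilter]
  have hc : (∑ l ∈ e.divisors, (μ l : ℂ)) = if e = 1 then 1 else 0 := by
    have h := moebius_sum e
    calc (∑ l ∈ e.divisors, (μ l : ℂ)) = ((∑ l ∈ e.divisors, μ l : ℤ) : ℂ) := by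
          push_cast; rfl
      _ = _ := by rw [h]; split_ifs <;> simp
  rw [hc, hgg]
  have hiff : e ^ s = 1 ↔ e = 1 := by
    constructor
    · intro h; exact Nat.pow_left_injective hs.ne' (by simpa using h)
    · rintro rfl; rw [one_pow]
  simp only [hiff]

noncomputable def crsJ (s d : ℕ) (c : ℤ) : ℂ :=
  ∑ j ∈ Icc 1 (d ^ s), if ggcd s j (d ^ s) = 1 then E (d ^ s) (c * j) else 0

lemma crsJ_eq {s : ℕ} (hs : 0 < s) {d : ℕ} (hd : 0 < d) (c : ℤ) :
    crsJ s d c = ∑ e ∈ d.divisors,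
      if ((e : ℤ)) ^ s ∣ c then ((e : ℂ)) ^ s * (μ (d / e) : ℂ) else 0 := by
  have step1 : crsJ s d c = ∑ j ∈ Icc 1 (d ^ s),
      (∑ l ∈ d.divisors, if l ^ s ∣ j then (μ l : ℂ) else 0) * E (d ^ s) (c * j) := by
    unfold crsJ
    refine Finset.sum_congr rfl fun j hj => ?_
    rw [Finset.mem_Icc] at hj
    rw [← indicator_moebius hs hd (by omega)]
    split_ifs <;> simp
  rw [step1]
  simp_rw [Finset.sum_mul]
  rw [Finset.sum_comm]
  have step2 : ∀ l ∈ d.divisors,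
      (∑ j ∈ Icc 1 (d ^ s), (if l ^ s ∣ j then (μ l : ℂ) else 0) * E (d ^ s) (c * j))
        = (μ l : ℂ) * (if (((d / l : ℕ) : ℤ)) ^ s ∣ c then (((d / l) ^ s : ℕ) : ℂ) else 0) := by
    intro l hl
    rw [Nat.mem_divisors] at hl
    obtain ⟨hld, _⟩ := hl
    have hl0 : 0 < l := Nat.pos_of_dvd_of_pos hld hd
    have hM0 : 0 < (d / l) ^ s := pow_pos (Nat.div_pos (Nat.le_of_dvd hd hld) hl0) s
    have hkey : l ^ s * (d / l) ^ s = d ^ s := by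
      rw [← mul_pow, Nat.mul_div_cancel' hld]
    have hbij : (∑ j ∈ Icc 1 (d ^ s), (if l ^ s ∣ j then (μ l : ℂ) else 0) * E (d ^ s) (c * j))
        = ∑ i ∈ Icc 1 ((d / l) ^ s), (μ l : ℂ) * E ((d / l) ^ s) (c * i) := by
      rw [← Finset.sum_filter_add_sum_filter_not (Icc 1 (d ^ s)) (fun j => l ^ s ∣ j)]
      have hz : ∑ j ∈ (Icc 1 (d ^ s)).filter (fun j => ¬ l ^ s ∣ j),
          (if l ^ s ∣ j then (μ l : ℂ) else 0) * E (d ^ s) (c * j) = 0 := by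
        refine Finset.sum_eq_zero fun j hj => ?_
        rw [Finset.mem_filter] at hj
        rw [if_neg hj.2, zero_mul]
      rw [hz, add_zero]
      refine Finset.sum_nbij' (fun j => j / l ^ s) (fun i => l ^ s * i) ?_ ?_ ?_ ?_ ?_
      · intro j hj
        simp only [Finset.mem_filter, Finset.mem_Icc] at hj
        obtain ⟨⟨hj1, hj2⟩, hdvd⟩ := hj
        rw [Finset.mem_Icc]
        constructor
        · have : l ^ s ≤ j := Nat.le_of_dvd (by omega) hdvd
          exact Nat.one_le_div_iff (pow_pos hl0 s) |>.mpr this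
        · have := Nat.div_le_div_right (c := l ^ s) hj2
          rwa [← hkey, Nat.mul_div_cancel_left _ (pow_pos hl0 s)] at this
      · intro i hi
        simp only [Finset.mem_Icc] at hi
        simp only [Finset.mem_filter, Finset.mem_Icc]
        refine ⟨⟨?_, ?_⟩, Dvd.intro i rfl⟩
        · exact Nat.mul_pos (pow_pos hl0 s) (by omega)
        · rw [← hkey]
          exact Nat.mul_le_mul_left _ hi.2
      · intro j hj
        simp only [Finset.mem_filter] at hj
        exact Nat.mul_div_cancel' hj.2
      · intro i hi
        rw [Nat.mul_div_cancel_left i (pow_pos hl0 s)]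
      · intro j hj
        simp only [Finset.mem_filter] at hj
        obtain ⟨-, i, rfl⟩ := hj
        rw [if_pos ⟨i, rfl⟩]
        rw [Nat.mul_div_cancel_left i (pow_pos hl0 s)]
        congr 1
        rw [← hkey]
        have hc2 : (c * ((l ^ s * i : ℕ) : ℤ)) = ((l ^ s : ℕ) : ℤ) * (c * i) := by
          push_cast; ring
        rw [hc2, E_mul_cancel (pow_pos hl0 s).ne']
    rw [hbij, ← Finset.mul_sum]
    congr 1
    have : ∀ i : ℕ, E ((d / l) ^ s) (c * i) = E ((d / l) ^ s) ((i : ℤ) * c) := by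
      intro i; congr 1; ring
    simp_rw [this]
    rw [← sum_range_eq_sum_Icc hM0 (fun i => E ((d / l) ^ s) ((i : ℤ) * c)) (by
      simp only [Nat.cast_zero, zero_mul, E_zero]
      exact ((E_eq_one_iff hM0 _).mpr ⟨c, rfl⟩).symm), E_ortho hM0 c]
    norm_cast
  rw [Finset.sum_congr rfl step2]
  rw [← Nat.sum_div_divisors d (fun e => if ((e : ℤ)) ^ s ∣ c then ((e : ℂ)) ^ s * (μ (d / e) : ℂ) else 0)]
  refine Finset.sum_congr rfl fun l hl => ?_
  rw [Nat.mem_divisors] at hl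
  rw [Nat.div_div_self hl.1 hd.ne']
  split_ifs
  · push_cast; ring
  · ring

section counting
variable {m : ℕ} [NeZero m]

lemma zmod_sum (g : ZMod m → ℂ) : ∑ y : ZMod m, g y = ∑ j ∈ range m, g (j : ZMod m) := by
  refine Finset.sum_nbij' (i := fun (y : ZMod m) => y.val) (j := fun (j : ℕ) => (j : ZMod m))
    ?_ ?_ ?_ ?_ ?_
  · intro y _; exact Finset.mem_range.mpr (ZMod.val_lt y)
  · intro j _; exact Finset.mem_univ _
  · intro y _; exact ZMod.natCast_rightInverse y
  · intro j hj; exact ZMod.val_cast_of_lt (Finset.mem_range.mp hj)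
  · intro y _; rw [ZMod.natCast_rightInverse y]

lemma chi_hom (t : ℕ) {ι : Type*} (S : Finset ι) (f : ι → ZMod m) :
    E m ((t : ℤ) * ((∑ i ∈ S, f i).val : ℤ)) = ∏ i ∈ S, E m ((t : ℤ) * ((f i).val : ℤ)) := by
  classical
  have hm : 0 < m := Nat.pos_of_ne_zero (NeZero.ne m)
  induction S using Finset.induction_on with
  | empty => simp [ZMod.val_zero, E_zero]
  | insert a S' hnotmem ih =>
    rw [Finset.sum_insert hnotmem, Finset.prod_insert hnotmem, ← ih, ← E_add]
    apply E_period hm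
    have h1 : ((f a + ∑ i ∈ S', f i).val : ℤ) ≡ ((f a).val : ℤ) + ((∑ i ∈ S', f i).val : ℤ) [ZMOD m] := by
      rw [ZMod.val_add]
      have := Int.emod_emod_of_dvd (((f a).val : ℤ) + ((∑ i ∈ S', f i).val : ℤ)) (dvd_refl (m : ℤ))
      unfold Int.ModEq
      push_cast
      omega
    calc ((t:ℤ) * ((f a + ∑ i ∈ S', f i).val : ℤ))
        ≡ (t:ℤ) * (((f a).val : ℤ) + ((∑ i ∈ S', f i).val : ℤ)) [ZMOD m] := h1.mul_left t
      _ = (t:ℤ) * ((f a).val : ℤ) + (t:ℤ) * ((∑ i ∈ S', f i).val : ℤ) := by ring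

lemma hind (hm : 0 < m) (n : ℕ) (z : ZMod m) :
    (if z = (n : ZMod m) then (1 : ℂ) else 0)
      = (m : ℂ)⁻¹ * ∑ t ∈ range m, E m ((t : ℤ) * ((z.val : ℤ) - (n : ℤ))) := by
  rw [E_ortho hm]
  have hiff : (m : ℤ) ∣ (z.val : ℤ) - (n : ℤ) ↔ z = (n : ZMod m) := by
    rw [← ZMod.intCast_zmod_eq_zero_iff_dvd]
    push_cast
    constructor
    · intro h
      have : ((z.val : ℤ) : ZMod m) = ((n : ℤ) : ZMod m) := by
        have := sub_eq_zero.mp h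
        exact_mod_cast this
      simpa using this
    · intro h
      rw [sub_eq_zero]
      push_cast
      simpa using h
  have hm' : (m : ℂ) ≠ 0 := Nat.cast_ne_zero.mpr hm.ne'
  split_ifs with h1 h2 h2
  · field_simp
  · exact absurd (hiff.mpr h1) h2
  · exact absurd (hiff.mp h2) h1
  · simp
end counting

lemma ggcd_one_left {s : ℕ} (hs : 0 < s) (d : ℕ) : ggcd s 1 (d ^ s) = 1 := by
  rw [ggcd_eq_one_iff hs one_pos]
  intro l _ hl
  have h1 : l ^ s = 1 := Nat.dvd_one.mp hl
  exact Nat.pow_left_injective hs.ne' (by simpa using h1)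

lemma ggcd_mul {s r : ℕ} (hs : 0 < s) (hr : 0 < r) {d : ℕ} (hdr : d ∣ r) {j : ℕ}
    (hj : 0 < j) (hgg : ggcd s j (d ^ s) = 1) :
    ggcd s ((r / d) ^ s * j) (r ^ s) = (r / d) ^ s := by
  have hd0 : 0 < d := Nat.pos_of_dvd_of_pos hdr hr
  have hrd0 : 0 < r / d := Nat.div_pos (Nat.le_of_dvd hr hdr) hd0
  have hT0 : 0 < (r / d) ^ s * j := Nat.mul_pos (pow_pos hrd0 s) hj
  obtain ⟨e, her, heT, hval, hmax⟩ := ggcd_spec hs ((r / d) ^ s * j) r hT0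
  have hrd_r : r / d ∣ r := Nat.div_dvd_of_dvd hdr
  have hrde : r / d ∣ e := hmax (r / d) hrd_r (Dvd.intro j rfl)
  obtain ⟨g, rfl⟩ := hrde
  have hgd : g ∣ d := by
    have h1 : r / d * g ∣ r / d * d := by
      rwa [Nat.div_mul_cancel hdr]
    exact (Nat.mul_dvd_mul_iff_left hrd0).mp h1
  have hgj : g ^ s ∣ j := by
    have h1 : (r / d) ^ s * g ^ s ∣ (r / d) ^ s * j := by
      rw [← mul_pow]; exact heT
    exact (Nat.mul_dvd_mul_iff_left (pow_pos hrd0 s)).mp h1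
  have hg1 : g = 1 := (ggcd_eq_one_iff hs hj).mp hgg g hgd hgj
  rw [hval, hg1, mul_one]

lemma crsJ_even {s r : ℕ} (hs : 0 < s) (hr : 0 < r) {T1 T2 : ℕ} (h1 : 0 < T1) (h2 : 0 < T2)
    (h : ggcd s T1 (r ^ s) = ggcd s T2 (r ^ s)) : crsJ s r (T1 : ℤ) = crsJ s r (T2 : ℤ) := by
  rw [crsJ_eq hs hr, crsJ_eq hs hr]
  refine Finset.sum_congr rfl fun e he => ?_
  rw [Nat.mem_divisors] at he
  have key : ∀ T : ℕ, 0 < T → (((e : ℤ)) ^ s ∣ (T : ℤ) ↔ e ^ s ∣ ggcd s T (r ^ s)) := by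
    intro T hT
    rw [pow_dvd_ggcd_iff hs hT]
    constructor
    · intro hd
      refine ⟨he.1, ?_⟩
      exact_mod_cast hd
    · rintro ⟨-, hd⟩
      exact_mod_cast hd
  by_cases hc : ((e : ℤ)) ^ s ∣ (T1 : ℤ)
  · rw [if_pos hc, if_pos (((key T2 h2).mpr (h ▸ (key T1 h1).mp hc)))]
  · rw [if_neg hc, if_neg (fun hc2 => hc (((key T1 h1).mpr (h.symm ▸ (key T2 h2).mp hc2))))]

lemma crsJ_neg {s : ℕ} (hs : 0 < s) {d : ℕ} (hd : 0 < d) (n : ℕ) :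
    crsJ s d (-(n : ℤ)) = crsJ s d (n : ℤ) := by
  rw [crsJ_eq hs hd, crsJ_eq hs hd]
  refine Finset.sum_congr rfl fun e he => ?_
  simp only [dvd_neg]

lemma crs_eq_crsJ (s d n : ℕ) : crs s d n = crsJ s d (n : ℤ) := by
  unfold crs crsJ
  refine Finset.sum_congr rfl fun j hj => ?_
  split_ifs with h
  · rw [E]
    congr 1
    push_cast
    ring
  · rfl

theorem stmt11 (s r n k : ℕ) (hs : 0 < s) (hr : 0 < r) (hn : 0 < n) :
    (Nat.card {x : Fin k → ZMod (r ^ s) //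
        (∀ i, ggcd s (x i).val (r ^ s) = 1) ∧ (∑ i, x i) = (n : ZMod (r ^ s))} : ℂ) =
      (1 / (r : ℂ) ^ s) * ∑ d ∈ r.divisors, (crs s r ((r / d) ^ s)) ^ k * crs s d n := by
  classical
  have hm : 0 < r ^ s := pow_pos hr s
  haveI : NeZero (r ^ s) := ⟨hm.ne'⟩
  set m := r ^ s with hm_def
  -- Step 0 : cardinality as a sum of indicators
  have h0 : (Nat.card {x : Fin k → ZMod m //
        (∀ i, ggcd s (x i).val m = 1) ∧ (∑ i, x i) = (n : ZMod m)} : ℂ)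
      = ∑ x : Fin k → ZMod m,
          if (∀ i, ggcd s ((x i).val) m = 1) ∧ (∑ i, x i) = (n : ZMod m)
          then (1 : ℂ) else 0 := by
    rw [Nat.card_eq_fintype_card, Fintype.card_subtype, ← Finset.sum_boole]
  rw [h0]
  -- Step 1 : split the indicator and insert the orthogonality relation
  have h1 : ∀ x : Fin k → ZMod m,
      (if (∀ i, ggcd s ((x i).val) m = 1) ∧ (∑ i, x i) = (n : ZMod m) then (1 : ℂ) else 0)
        = (∏ i, if ggcd s ((x i).val) m = 1 then (1 : ℂ) else 0)
          * ((m : ℂ)⁻¹ * ∑ t ∈ range m, E m ((t : ℤ) * (((∑ i, x i).val : ℤ) - (n : ℤ)))) := by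
    intro x
    rw [← hind hm n (∑ i, x i), Finset.prod_boole]
    by_cases hA : ∀ i, ggcd s ((x i).val) m = 1 <;>
      by_cases hB : (∑ i, x i) = (n : ZMod m) <;>
      simp [hA, hB]
  simp_rw [h1]
  -- Step 2 : exchange sums and factor
  have h2 : ∑ x : Fin k → ZMod m,
      (∏ i, if ggcd s ((x i).val) m = 1 then (1 : ℂ) else 0)
        * ((m : ℂ)⁻¹ * ∑ t ∈ range m, E m ((t : ℤ) * (((∑ i, x i).val : ℤ) - (n : ℤ))))
      = (m : ℂ)⁻¹ * ∑ t ∈ range m,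
          E m ((t : ℤ) * (-(n : ℤ)))
            * (∑ y : ZMod m, (if ggcd s (y.val) m = 1 then (1 : ℂ) else 0)
                * E m ((t : ℤ) * (y.val : ℤ))) ^ k := by
    have key : ∀ (t : ℕ) (x : Fin k → ZMod m),
        (∏ i, if ggcd s ((x i).val) m = 1 then (1 : ℂ) else 0)
          * E m ((t : ℤ) * (((∑ i, x i).val : ℤ) - (n : ℤ)))
        = E m ((t : ℤ) * (-(n : ℤ)))
          * ∏ i, ((if ggcd s ((x i).val) m = 1 then (1 : ℂ) else 0)
              * E m ((t : ℤ) * ((x i).val : ℤ))) := by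
      intro t x
      have e1 : ((t : ℤ) * (((∑ i, x i).val : ℤ) - (n : ℤ)))
          = (t : ℤ) * (((∑ i, x i).val : ℤ)) + (t : ℤ) * (-(n : ℤ)) := by ring
      rw [e1, E_add, chi_hom t univ x, Finset.prod_mul_distrib]
      ring
    calc ∑ x : Fin k → ZMod m,
        (∏ i, if ggcd s ((x i).val) m = 1 then (1 : ℂ) else 0)
          * ((m : ℂ)⁻¹ * ∑ t ∈ range m, E m ((t : ℤ) * (((∑ i, x i).val : ℤ) - (n : ℤ))))
        = ∑ x : Fin k → ZMod m, (m : ℂ)⁻¹ * ∑ t ∈ range m,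
            (∏ i, if ggcd s ((x i).val) m = 1 then (1 : ℂ) else 0)
              * E m ((t : ℤ) * (((∑ i, x i).val : ℤ) - (n : ℤ))) := by
          refine Finset.sum_congr rfl fun x _ => ?_
          rw [mul_left_comm, Finset.mul_sum]
      _ = (m : ℂ)⁻¹ * ∑ x : Fin k → ZMod m, ∑ t ∈ range m,
            (∏ i, if ggcd s ((x i).val) m = 1 then (1 : ℂ) else 0)
              * E m ((t : ℤ) * (((∑ i, x i).val : ℤ) - (n : ℤ))) := by
          rw [Finset.mul_sum]
      _ = (m : ℂ)⁻¹ * ∑ t ∈ range m, ∑ x : Fin k → ZMod m,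
            (∏ i, if ggcd s ((x i).val) m = 1 then (1 : ℂ) else 0)
              * E m ((t : ℤ) * (((∑ i, x i).val : ℤ) - (n : ℤ))) := by
          rw [Finset.sum_comm]
      _ = (m : ℂ)⁻¹ * ∑ t ∈ range m,
            E m ((t : ℤ) * (-(n : ℤ)))
              * (∑ y : ZMod m, (if ggcd s (y.val) m = 1 then (1 : ℂ) else 0)
                  * E m ((t : ℤ) * (y.val : ℤ))) ^ k := by
          congr 1
          refine Finset.sum_congr rfl fun t _ => ?_
          simp_rw [key t]
          rw [← Finset.mul_sum]
          congr 1
          rw [Fintype.sum_pow]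
  rw [h2]
  -- Step 3 : the inner sum is `A t`, then shift the `t`-range and identify with `crsJ`
  have h3 : ∀ t : ℕ, (∑ y : ZMod m, (if ggcd s (y.val) m = 1 then (1 : ℂ) else 0)
      * E m ((t : ℤ) * (y.val : ℤ)))
      = ∑ j ∈ range m, (if ggcd s j m = 1 then E m ((t : ℤ) * (j : ℤ)) else 0) := by
    intro t
    rw [zmod_sum]
    refine Finset.sum_congr rfl fun j hj => ?_
    rw [ZMod.val_cast_of_lt (Finset.mem_range.mp hj)]
    split_ifs <;> simp
  simp_rw [h3]
  have h4 : ∀ t : ℕ, (∑ j ∈ range m, (if ggcd s j m = 1 then E m ((t : ℤ) * (j : ℤ)) else 0))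
      = crsJ s r (t : ℤ) := by
    intro t
    have hf : (fun j : ℕ => if ggcd s j m = 1 then E m ((t : ℤ) * (j : ℤ)) else 0) 0
        = (fun j : ℕ => if ggcd s j m = 1 then E m ((t : ℤ) * (j : ℤ)) else 0) m := by
      simp only
      rw [ggcd_zero_left s m]
      split_ifs with hc
      · simp only [Nat.cast_zero, mul_zero, E_zero]
        exact ((E_eq_one_iff hm _).mpr ⟨t, by push_cast; ring⟩).symm
      · rfl
    refine (sum_range_eq_sum_Icc hm _ hf).trans ?_
    rw [show crsJ s r (t : ℤ)
        = ∑ j ∈ Icc 1 m, (if ggcd s j m = 1 then E m ((t : ℤ) * (j : ℤ)) else 0) from rfl]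
  simp_rw [h4]
  -- Step 4 : shift t-range
  have h5 : ∑ t ∈ range m, E m ((t : ℤ) * (-(n : ℤ))) * crsJ s r (t : ℤ) ^ k
      = ∑ t ∈ Icc 1 m, E m ((t : ℤ) * (-(n : ℤ))) * crsJ s r (t : ℤ) ^ k := by
    refine sum_range_eq_sum_Icc hm _ ?_
    have hE : E m (((0 : ℕ) : ℤ) * (-(n : ℤ))) = E m (((m : ℕ) : ℤ) * (-(n : ℤ))) := by
      simp only [Nat.cast_zero, zero_mul, E_zero]
      exact ((E_eq_one_iff hm _).mpr ⟨-(n : ℤ), rfl⟩).symm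
    have hA : crsJ s r ((0 : ℕ) : ℤ) = crsJ s r ((m : ℕ) : ℤ) := by
      rw [crsJ, crsJ, ← hm_def]
      refine Finset.sum_congr rfl fun j _ => ?_
      split_ifs with hc
      · simp only [Nat.cast_zero, zero_mul, E_zero]
        exact ((E_eq_one_iff hm _).mpr ⟨(j : ℤ), by push_cast; ring⟩).symm
      · rfl
    rw [hE, hA]
  rw [h5]
  -- Step 5 : partition `Icc 1 m` according to the divisor `d`
  have h6 : ∑ t ∈ Icc 1 m, E m ((t : ℤ) * (-(n : ℤ))) * crsJ s r (t : ℤ) ^ k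
      = ∑ p ∈ r.divisors.sigma
          (fun d => (Icc 1 (d ^ s)).filter (fun j => ggcd s j (d ^ s) = 1)),
          (crs s r ((r / p.1) ^ s)) ^ k * E (p.1 ^ s) ((-(n : ℤ)) * (p.2 : ℤ)) := by
    refine (Finset.sum_nbij (i := fun p => (r / p.1) ^ s * p.2) ?_ ?_ ?_ ?_).symm
    · rintro ⟨d, j⟩ hp
      simp only [Finset.mem_sigma, Nat.mem_divisors, Finset.mem_filter, Finset.mem_Icc] at hp
      obtain ⟨⟨hdr, -⟩, ⟨hj1, hj2⟩, -⟩ := hp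
      have hd0 : 0 < d := Nat.pos_of_dvd_of_pos hdr hr
      have hrd0 : 0 < r / d := Nat.div_pos (Nat.le_of_dvd hr hdr) hd0
      rw [Finset.mem_Icc]
      constructor
      · exact Nat.mul_pos (pow_pos hrd0 s) hj1
      · calc (r / d) ^ s * j ≤ (r / d) ^ s * d ^ s := Nat.mul_le_mul_left _ hj2
          _ = m := by rw [← mul_pow, Nat.div_mul_cancel hdr, hm_def]
    · rintro ⟨d, j⟩ hp ⟨d', j'⟩ hp' heq
      simp only [Finset.coe_sigma, Set.mem_sigma_iff, Finset.mem_coe, Nat.mem_divisors,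
        Finset.mem_filter, Finset.mem_Icc] at hp hp'
      obtain ⟨⟨hdr, -⟩, ⟨hj1, -⟩, hgg⟩ := hp
      obtain ⟨⟨hdr', -⟩, ⟨hj1', -⟩, hgg'⟩ := hp'
      simp only at heq
      have hg1 : ggcd s ((r / d) ^ s * j) (r ^ s) = (r / d) ^ s :=
        ggcd_mul hs hr hdr (by omega) hgg
      have hg2 : ggcd s ((r / d') ^ s * j') (r ^ s) = (r / d') ^ s :=
        ggcd_mul hs hr hdr' (by omega) hgg'
      have hrd : (r / d) ^ s = (r / d') ^ s := by rw [← hg1, ← hg2, heq]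
      have hrd' : r / d = r / d' := Nat.pow_left_injective hs.ne' hrd
      have hdd : d = d' := by
        rw [← Nat.div_div_self hdr hr.ne', hrd', Nat.div_div_self hdr' hr.ne']
      subst hdd
      have hjj : j = j' := by
        have hrd0 : 0 < (r / d) ^ s :=
          pow_pos (Nat.div_pos (Nat.le_of_dvd hr hdr) (Nat.pos_of_dvd_of_pos hdr hr)) s
        exact Nat.eq_of_mul_eq_mul_left hrd0 heq
      rw [hjj]
    · intro t ht
      simp only [Finset.coe_Icc, Set.mem_Icc] at ht
      obtain ⟨ht1, ht2⟩ := ht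
      obtain ⟨e, her, heT, hval, hmax⟩ := ggcd_spec hs t r (by omega)
      have he0 : 0 < e := by
        rcases Nat.eq_zero_or_pos e with rfl | h
        · rw [zero_pow hs.ne', zero_dvd_iff] at heT; omega
        · exact h
      have hes0 : 0 < e ^ s := pow_pos he0 s
      have hed : e * (r / e) = r := Nat.mul_div_cancel' her
      have hkey : e ^ s * (r / e) ^ s = m := by rw [← mul_pow, hed, hm_def]
      have hjpos : 0 < t / e ^ s :=
        Nat.one_le_div_iff hes0 |>.mpr (Nat.le_of_dvd (by omega) heT)
      refine (Set.mem_image _ _ _).mpr ⟨⟨r / e, t / e ^ s⟩, ?_, ?_⟩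
      · simp only [Finset.coe_sigma, Set.mem_sigma_iff, Finset.mem_coe, Nat.mem_divisors,
          Finset.mem_filter, Finset.mem_Icc]
        refine ⟨⟨Nat.div_dvd_of_dvd her, hr.ne'⟩, ⟨hjpos, ?_⟩, ?_⟩
        · have := Nat.div_le_div_right (c := e ^ s) ht2
          rwa [← hkey, Nat.mul_div_cancel_left _ hes0] at this
        · rw [ggcd_eq_one_iff hs hjpos]
          intro l hld hlj
          have hel : e * l ∣ r := by
            calc e * l ∣ e * (r / e) := Nat.mul_dvd_mul_left e hld
              _ = r := hed
          have helT : (e * l) ^ s ∣ t := by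
            rw [mul_pow]
            calc e ^ s * l ^ s ∣ e ^ s * (t / e ^ s) := Nat.mul_dvd_mul_left _ hlj
              _ = t := Nat.mul_div_cancel' heT
          have := hmax (e * l) hel helT
          have hl1 : l ∣ 1 := by
            have h1 : e * l ∣ e * 1 := by rwa [mul_one]
            exact (Nat.mul_dvd_mul_iff_left he0).mp h1
          exact Nat.dvd_one.mp hl1
      · simp only
        rw [Nat.div_div_self her hr.ne', Nat.mul_div_cancel' heT]
    · rintro ⟨d, j⟩ hp
      simp only [Finset.mem_sigma, Nat.mem_divisors, Finset.mem_filter, Finset.mem_Icc] at hp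
      obtain ⟨⟨hdr, -⟩, ⟨hj1, hj2⟩, hgg⟩ := hp
      have hd0 : 0 < d := Nat.pos_of_dvd_of_pos hdr hr
      have hrd0 : 0 < r / d := Nat.div_pos (Nat.le_of_dvd hr hdr) hd0
      have hrds0 : 0 < (r / d) ^ s := pow_pos hrd0 s
      have hkey : (r / d) ^ s * d ^ s = m := by rw [← mul_pow, Nat.div_mul_cancel hdr, hm_def]
      have hg1 : ggcd s ((r / d) ^ s * j) (r ^ s) = (r / d) ^ s :=
        ggcd_mul hs hr hdr (by omega) hgg
      have hg2 : ggcd s ((r / d) ^ s) (r ^ s) = (r / d) ^ s := by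
        have := ggcd_mul hs hr hdr one_pos (ggcd_one_left hs d)
        rwa [mul_one] at this
      have hcrsJ : crsJ s r (((r / d) ^ s * j : ℕ) : ℤ) = crsJ s r (((r / d) ^ s : ℕ) : ℤ) :=
        crsJ_even hs hr (Nat.mul_pos hrds0 (by omega)) hrds0 (by rw [hg1, hg2])
      have hE : E m ((((r / d) ^ s * j : ℕ) : ℤ) * (-(n : ℤ))) = E (d ^ s) ((-(n : ℤ)) * (j : ℤ)) := by
        rw [← hkey]
        have : ((((r / d) ^ s * j : ℕ)) : ℤ) * (-(n : ℤ))
            = (((r / d) ^ s : ℕ) : ℤ) * ((-(n : ℤ)) * (j : ℤ)) := by push_cast; ring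
        rw [this, E_mul_cancel hrds0.ne']
      simp only
      rw [hcrsJ, hE, ← crs_eq_crsJ]
      ring
  rw [h6, Finset.sum_sigma]
  -- Step 6 : identify the inner sum with `crs s d n`
  have h7 : ∀ d ∈ r.divisors,
      (∑ j ∈ (Icc 1 (d ^ s)).filter (fun j => ggcd s j (d ^ s) = 1),
        (crs s r ((r / d) ^ s)) ^ k * E (d ^ s) ((-(n : ℤ)) * (j : ℤ)))
      = (crs s r ((r / d) ^ s)) ^ k * crs s d n := by
    intro d hd
    rw [← Finset.mul_sum]
    congr 1
    rw [crs_eq_crsJ, ← crsJ_neg hs (Nat.pos_of_dvd_of_pos (Nat.mem_divisors.mp hd).1 hr) n,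
      crsJ, Finset.sum_filter]
  rw [Finset.sum_congr rfl h7]
  rw [one_div]
  congr 1
  rw [hm_def]
  push_cast
  ring
end

section
/- Inversion formula for (r,s)-even functions: if f and g are (r,s)-even and f(n) = Σ_{d|r} g(d) c_{d,s}(n) for all n, then g(m) = (1/r^s) Σ_{d|r} f(r^s/d^s) c_{d,s}(n) whenever m^s = r^s/(n,r^s)_s. -/
open Finset

namespace H0

lemma ggcd_bdd {s a b : ℕ} (hb : b ≠ 0) :
    BddAbove {m : ℕ | (∃ l : ℕ, m = l ^ s) ∧ m ∣ a ∧ m ∣ b} :=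
  ⟨b, fun m hm => Nat.le_of_dvd (Nat.pos_of_ne_zero hb) hm.2.2⟩

lemma ggcd_spec (s : ℕ) {a b : ℕ} (hb : b ≠ 0) :
    (∃ l : ℕ, ggcd s a b = l ^ s) ∧ ggcd s a b ∣ a ∧ ggcd s a b ∣ b := by
  have h1 : (1:ℕ) ∈ {m : ℕ | (∃ l : ℕ, m = l ^ s) ∧ m ∣ a ∧ m ∣ b} :=
    ⟨⟨1, (one_pow s).symm⟩, one_dvd _, one_dvd _⟩
  exact Nat.sSup_mem ⟨1, h1⟩ (ggcd_bdd hb)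

lemma le_ggcd {s a b m : ℕ} (hb : b ≠ 0)
    (h : m ∈ {m : ℕ | (∃ l : ℕ, m = l ^ s) ∧ m ∣ a ∧ m ∣ b}) : m ≤ ggcd s a b :=
  le_csSup (ggcd_bdd hb) h

lemma ggcd_pos {s a b : ℕ} (hb : b ≠ 0) : 0 < ggcd s a b :=
  lt_of_lt_of_le one_pos (le_ggcd hb ⟨⟨1, (one_pow s).symm⟩, one_dvd _, one_dvd _⟩)

lemma lcm_pow {x y s : ℕ} (hx : x ≠ 0) (hy : y ≠ 0) :
    Nat.lcm (x ^ s) (y ^ s) = Nat.lcm x y ^ s := by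
  have hxs : x ^ s ≠ 0 := pow_ne_zero _ hx
  have hys : y ^ s ≠ 0 := pow_ne_zero _ hy
  apply Nat.eq_of_factorization_eq (Nat.lcm_ne_zero hxs hys)
    (pow_ne_zero _ (Nat.lcm_ne_zero hx hy))
  intro p
  rw [Nat.factorization_lcm hxs hys, Nat.factorization_pow, Nat.factorization_pow,
    Nat.factorization_pow, Nat.factorization_lcm hx hy]
  simp only [Finsupp.sup_apply, Finsupp.smul_apply, smul_eq_mul]
  rcases le_total (x.factorization p) (y.factorization p) with h | h
  · rw [sup_of_le_right h, sup_of_le_right (Nat.mul_le_mul_left s h)]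
  · rw [sup_of_le_left h, sup_of_le_left (Nat.mul_le_mul_left s h)]

lemma pow_dvd_ggcd {s a b x : ℕ} (hs : 0 < s) (hb : b ≠ 0)
    (hxa : x ^ s ∣ a) (hxb : x ^ s ∣ b) : x ^ s ∣ ggcd s a b := by
  obtain ⟨⟨y, hy⟩, hGa, hGb⟩ := ggcd_spec s (a := a) hb
  have hx0 : x ≠ 0 := by
    rintro rfl; rw [zero_pow hs.ne'] at hxb; exact hb (zero_dvd_iff.mp hxb)
  have hy0 : y ≠ 0 := by
    rintro rfl
    rw [hy, zero_pow hs.ne'] at hGb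
    exact hb (zero_dvd_iff.mp hGb)
  set w := Nat.lcm x y with hw
  have hw0 : w ≠ 0 := Nat.lcm_ne_zero hx0 hy0
  have hwa : w ^ s ∣ a := by
    rw [← lcm_pow hx0 hy0]; exact Nat.lcm_dvd hxa (hy ▸ hGa)
  have hwb : w ^ s ∣ b := by
    rw [← lcm_pow hx0 hy0]; exact Nat.lcm_dvd hxb (hy ▸ hGb)
  have hle : w ^ s ≤ ggcd s a b := le_ggcd hb ⟨⟨w, rfl⟩, hwa, hwb⟩
  have hyw : y ≤ w := Nat.le_of_dvd (Nat.pos_of_ne_zero hw0) (Nat.dvd_lcm_right x y)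
  have heq : w ^ s = y ^ s :=
    le_antisymm (hy ▸ hle) (Nat.pow_le_pow_left hyw s)
  have : x ^ s ∣ w ^ s := pow_dvd_pow_of_dvd (Nat.dvd_lcm_left x y) s
  rw [heq, ← hy] at this
  exact this

noncomputable def srt (s x : ℕ) : ℕ := sSup {l : ℕ | l ^ s ∣ x}

lemma srt_pow {s l : ℕ} (hs : 0 < s) (hl : l ≠ 0) : srt s (l ^ s) = l := by
  have hbdd : BddAbove {m : ℕ | m ^ s ∣ l ^ s} := by
    refine ⟨l, fun m hm => ?_⟩
    exact Nat.le_of_dvd (Nat.pos_of_ne_zero hl) ((Nat.pow_dvd_pow_iff hs.ne').mp hm)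
  apply le_antisymm
  · exact csSup_le ⟨1, by simp⟩ fun m hm =>
      Nat.le_of_dvd (Nat.pos_of_ne_zero hl) ((Nat.pow_dvd_pow_iff hs.ne').mp hm)
  · exact le_csSup hbdd (dvd_refl _)

end H0

namespace H0

/-- Key lemma: if `d ∣ r` and `(j, d^s)_s = 1` then `(j·(r/d)^s, r^s)_s = (r/d)^s`. -/
lemma ggcd_mul_eq {s r d j : ℕ} (hs : 0 < s) (hr : 0 < r) (hd : d ∣ r)
    (hj : ggcd s j (d ^ s) = 1) :
    ggcd s (j * (r / d) ^ s) (r ^ s) = (r / d) ^ s := by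
  have hd0 : d ≠ 0 := by rintro rfl; simp at hd; omega
  set e := r / d with he
  have hde : d * e = r := Nat.mul_div_cancel' hd
  have he0 : e ≠ 0 := by intro h; rw [h, mul_zero] at hde; omega
  have hrs0 : r ^ s ≠ 0 := pow_ne_zero _ hr.ne'
  obtain ⟨⟨l, hl⟩, hGk, hGr⟩ := ggcd_spec s (a := j * e ^ s) hrs0
  have hl0 : l ≠ 0 := by
    rintro rfl
    rw [hl, zero_pow hs.ne'] at hGr
    exact hrs0 (zero_dvd_iff.mp hGr)
  have hlr : l ∣ r := (Nat.pow_dvd_pow_iff hs.ne').mp (hl ▸ hGr)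
  apply Nat.dvd_antisymm
  · -- ggcd ∣ e^s
    rw [hl]
    set w := Nat.lcm l e with hw
    have hw0 : w ≠ 0 := Nat.lcm_ne_zero hl0 he0
    have hew : e ∣ w := Nat.dvd_lcm_right l e
    have hwr : w ∣ r := Nat.lcm_dvd hlr (Dvd.intro_left d hde)
    set u := w / e with hu
    have hue : u * e = w := Nat.div_mul_cancel hew
    have hwk : w ^ s ∣ j * e ^ s := by
      rw [← lcm_pow hl0 he0]
      exact Nat.lcm_dvd (hl ▸ hGk) (Dvd.intro_left j rfl)
    have hus : u ^ s ∣ j := by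
      have : u ^ s * e ^ s ∣ j * e ^ s := by rw [← mul_pow, hue]; exact hwk
      exact (Nat.mul_dvd_mul_iff_right (Nat.pos_of_ne_zero (pow_ne_zero _ he0))).mp this
    have hud : u ∣ d := by
      have : u * e ∣ d * e := by rw [hue, hde]; exact hwr
      exact (Nat.mul_dvd_mul_iff_right (Nat.pos_of_ne_zero he0)).mp this
    have : u ^ s ∣ ggcd s j (d ^ s) :=
      pow_dvd_ggcd hs (pow_ne_zero _ hd0) hus (pow_dvd_pow_of_dvd hud s)
    rw [hj] at this
    have hu1 : u = 1 := by
      have h1 : u ^ s = 1 := Nat.eq_one_of_dvd_one this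
      exact (pow_eq_one_iff.mp h1).resolve_right hs.ne'
    have hwe : w = e := by rw [← hue, hu1, one_mul]
    calc l ^ s ∣ w ^ s := pow_dvd_pow_of_dvd (Nat.dvd_lcm_left l e) s
      _ = e ^ s := by rw [hwe]
  · -- e^s ∣ ggcd
    exact pow_dvd_ggcd hs hrs0 (Dvd.intro_left j rfl)
      (pow_dvd_pow_of_dvd (Dvd.intro_left d hde) s)

end H0

namespace H0

/-- Every `k ∈ [1, r^s]` decomposes uniquely as `j·(r/d)^s`. -/
lemma exists_decomp {s r k : ℕ} (hs : 0 < s) (hr : 0 < r)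
    (hk1 : 1 ≤ k) (hk2 : k ≤ r ^ s) :
    ∃ d, d ∣ r ∧ ∃ j, 1 ≤ j ∧ j ≤ d ^ s ∧ ggcd s j (d ^ s) = 1 ∧
      k = j * (r / d) ^ s ∧ (r / d) ^ s = ggcd s k (r ^ s) := by
  have hrs0 : r ^ s ≠ 0 := pow_ne_zero _ hr.ne'
  obtain ⟨⟨l, hl⟩, hGk, hGr⟩ := ggcd_spec s (a := k) hrs0
  have hl0 : l ≠ 0 := by
    rintro rfl
    rw [hl, zero_pow hs.ne'] at hGk
    omega
  have hlr : l ∣ r := (Nat.pow_dvd_pow_iff hs.ne').mp (hl ▸ hGr)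
  refine ⟨r / l, Nat.div_dvd_of_dvd hlr, k / l ^ s, ?_⟩
  set d := r / l with hd
  have hdl : d * l = r := Nat.div_mul_cancel hlr
  have hrd : r / d = l := by
    rw [hd, Nat.div_div_self hlr hr.ne']
  set j := k / l ^ s with hj
  have hjl : j * l ^ s = k := Nat.div_mul_cancel (hl ▸ hGk)
  have hd0 : d ≠ 0 := by intro h; rw [h, zero_mul] at hdl; omega
  have hls0 : (0:ℕ) < l ^ s := Nat.pos_of_ne_zero (pow_ne_zero _ hl0)
  have hj1 : 1 ≤ j := by
    rcases Nat.eq_zero_or_pos j with h | h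
    · rw [h, zero_mul] at hjl; omega
    · exact h
  have hj2 : j ≤ d ^ s := by
    have : j * l ^ s ≤ d ^ s * l ^ s := by
      rw [hjl, ← mul_pow, hdl]; exact hk2
    exact Nat.le_of_mul_le_mul_right this hls0
  have hcop : ggcd s j (d ^ s) = 1 := by
    obtain ⟨⟨y, hy⟩, hyj, hyd⟩ := ggcd_spec s (a := j) (pow_ne_zero _ hd0)
    have hyd' : y ∣ d := (Nat.pow_dvd_pow_iff hs.ne').mp (hy ▸ hyd)
    have h1 : (y * l) ^ s ∣ k := by
      rw [mul_pow, ← hjl]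
      exact mul_dvd_mul (hy ▸ hyj) dvd_rfl
    have h2 : (y * l) ^ s ∣ r ^ s :=
      pow_dvd_pow_of_dvd (hdl ▸ mul_dvd_mul hyd' dvd_rfl) s
    have h3 : (y * l) ^ s ∣ l ^ s := hl ▸ pow_dvd_ggcd hs hrs0 h1 h2
    have h4 : y * l ∣ l := (Nat.pow_dvd_pow_iff hs.ne').mp h3
    have hy1 : y = 1 := by
      have := Nat.le_of_dvd (Nat.pos_of_ne_zero hl0) h4
      have hy0 : y ≠ 0 := by
        rintro rfl; rw [hy, zero_pow hs.ne'] at hyd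
        exact (pow_ne_zero _ hd0) (zero_dvd_iff.mp hyd)
      nlinarith [Nat.one_le_iff_ne_zero.mpr hy0, Nat.one_le_iff_ne_zero.mpr hl0]
    rw [hy, hy1, one_pow]
  exact ⟨hj1, hj2, hcop, by rw [hrd, hjl], by rw [hrd, hl]⟩

/-- uniqueness of the representative mod N in [1,N] -/
lemma rep_unique {N n x y : ℕ} (hx1 : 1 ≤ x) (hx2 : x ≤ N) (hy1 : 1 ≤ y) (hy2 : y ≤ N)
    (hx : N ∣ x + n) (hy : N ∣ y + n) : x = y := by
  obtain ⟨a, ha⟩ := hx; obtain ⟨b, hb⟩ := hy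
  rcases lt_trichotomy a b with h | h | h
  · have h2 : N * (a + 1) ≤ N * b := Nat.mul_le_mul_left N h
    rw [Nat.mul_succ] at h2
    omega
  · subst h; omega
  · have h2 : N * (b + 1) ≤ N * a := Nat.mul_le_mul_left N h
    rw [Nat.mul_succ] at h2
    omega

lemma ggcd_congr {s N x n : ℕ} (h : N ∣ x + n) : ggcd s x N = ggcd s n N := by
  unfold ggcd
  congr 1
  ext m
  simp only [Set.mem_setOf_eq, and_congr_right_iff]
  intro _ 
  constructor
  · rintro ⟨h1, h2⟩
    exact ⟨(Nat.dvd_add_right h1).mp (h2.trans h), h2⟩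
  · rintro ⟨h1, h2⟩
    refine ⟨?_, h2⟩
    have := Nat.dvd_sub (h2.trans h) h1
    simpa using this

end H0

namespace H0

lemma sum_Icc_partition {s r : ℕ} (hs : 0 < s) (hr : 0 < r) (h : ℕ → ℂ) :
    ∑ k ∈ Icc 1 (r ^ s), h k =
      ∑ d ∈ r.divisors, ∑ j ∈ (Icc 1 (d ^ s)).filter (fun j => ggcd s j (d ^ s) = 1),
        h (j * (r / d) ^ s) := by
  have he0 : ∀ d : ℕ, d ∣ r → r / d ≠ 0 := fun d hd =>
    Nat.div_ne_zero_iff_of_dvd hd |>.mpr ⟨hr.ne', fun h0 => by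
      subst h0; exact absurd (Nat.eq_zero_of_zero_dvd hd) hr.ne'⟩
  have hde : ∀ d : ℕ, d ∣ r → d * (r / d) = r := fun d hd => Nat.mul_div_cancel' hd
  have hinv : ∀ d j : ℕ, d ∣ r → ggcd s j (d ^ s) = 1 →
      r / srt s (ggcd s (j * (r / d) ^ s) (r ^ s)) = d ∧
      (j * (r / d) ^ s) / ggcd s (j * (r / d) ^ s) (r ^ s) = j := by
    intro d j hd hjc
    rw [ggcd_mul_eq hs hr hd hjc, srt_pow hs (he0 d hd)]
    constructor
    · exact Nat.div_div_self hd hr.ne'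
    · exact Nat.mul_div_cancel j (Nat.pos_of_ne_zero (pow_ne_zero _ (he0 d hd)))
  rw [Finset.sum_sigma' (r.divisors)
    (fun d => (Icc 1 (d ^ s)).filter (fun j => ggcd s j (d ^ s) = 1))
    (fun d j => h (j * (r / d) ^ s))]
  refine Finset.sum_nbij'
    (fun k => (⟨r / srt s (ggcd s k (r ^ s)), k / ggcd s k (r ^ s)⟩ : (d : ℕ) × ℕ))
    (fun p => p.2 * (r / p.1) ^ s) ?_ ?_ ?_ ?_ ?_
  · intro k hk
    simp only [Finset.mem_Icc] at hk
    obtain ⟨d, hd, j, hj1, hj2, hjc, hkeq, hgg⟩ := exists_decomp hs hr hk.1 hk.2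
    subst hkeq
    obtain ⟨h1, h2⟩ := hinv d j hd hjc
    simp only [Finset.mem_sigma, Nat.mem_divisors, Finset.mem_filter, Finset.mem_Icc, h1, h2]
    exact ⟨⟨hd, hr.ne'⟩, ⟨hj1, hj2⟩, hjc⟩
  · rintro ⟨d, j⟩ hp
    simp only [Finset.mem_sigma, Nat.mem_divisors, Finset.mem_filter, Finset.mem_Icc] at hp
    obtain ⟨⟨hd, -⟩, ⟨hj1, hj2⟩, hjc⟩ := hp
    simp only [Finset.mem_Icc]
    constructor
    · exact Nat.one_le_iff_ne_zero.mpr (Nat.mul_ne_zero (by omega) (pow_ne_zero _ (he0 d hd)))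
    · calc j * (r / d) ^ s ≤ d ^ s * (r / d) ^ s := Nat.mul_le_mul_right _ hj2
        _ = r ^ s := by rw [← mul_pow, hde d hd]
  · intro k hk
    simp only [Finset.mem_Icc] at hk
    obtain ⟨d, hd, j, hj1, hj2, hjc, hkeq, hgg⟩ := exists_decomp hs hr hk.1 hk.2
    subst hkeq
    obtain ⟨h1, h2⟩ := hinv d j hd hjc
    simp only [h1, h2]
  · rintro ⟨d, j⟩ hp
    simp only [Finset.mem_sigma, Nat.mem_divisors, Finset.mem_filter, Finset.mem_Icc] at hp
    obtain ⟨⟨hd, -⟩, ⟨hj1, hj2⟩, hjc⟩ := hp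
    obtain ⟨h1, h2⟩ := hinv d j hd hjc
    simp only [h1, h2]
  · intro k hk
    simp only [Finset.mem_Icc] at hk
    obtain ⟨d, hd, j, hj1, hj2, hjc, hkeq, hgg⟩ := exists_decomp hs hr hk.1 hk.2
    subst hkeq
    obtain ⟨h1, h2⟩ := hinv d j hd hjc
    simp only [h1, h2]

end H0

namespace H0

open Complex Real

lemma sum_exp_range {N : ℕ} (hN : 0 < N) (t : ℤ) :
    ∑ k ∈ Finset.range N, Complex.exp (2 * Real.pi * Complex.I * t * k / N) =
      if (N:ℤ) ∣ t then (N:ℂ) else 0 := by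
  have hNC : (N:ℂ) ≠ 0 := Nat.cast_ne_zero.mpr hN.ne'
  set z : ℂ := Complex.exp (2 * Real.pi * Complex.I * t / N) with hz
  have hterm : ∀ k : ℕ, Complex.exp (2 * Real.pi * Complex.I * t * k / N) = z ^ k := by
    intro k
    rw [hz, ← Complex.exp_nat_mul]
    ring_nf
  simp_rw [hterm]
  by_cases hdvd : (N:ℤ) ∣ t
  · obtain ⟨c, hc⟩ := hdvd
    have hz1 : z = 1 := by
      rw [hz]
      have : 2 * Real.pi * Complex.I * t / N = c * (2 * Real.pi * Complex.I) := by
        have : (t:ℂ) = (N:ℂ) * (c:ℂ) := by exact_mod_cast congrArg (Int.cast : ℤ → ℂ) hc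
        rw [this, mul_div_assoc, mul_div_cancel_left₀ _ hNC]
        ring
      rw [this]
      exact Complex.exp_int_mul_two_pi_mul_I c
    rw [if_pos ⟨c, hc⟩]
    simp [hz1]
  · have hz1 : z ≠ 1 := by
      intro h
      rw [hz, Complex.exp_eq_one_iff] at h
      obtain ⟨c, hc⟩ := h
      apply hdvd
      have hpi : (2 * (Real.pi:ℂ) * Complex.I : ℂ) ≠ 0 := by
        simp [Complex.I_ne_zero, Real.pi_ne_zero, Complex.ofReal_ne_zero]
      have h2 : (t:ℂ) / N = c := by
        have e1 : 2 * (Real.pi:ℂ) * Complex.I * t / N =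
            (2 * (Real.pi:ℂ) * Complex.I) * ((t:ℂ) / N) := by ring
        have e2 : (c:ℂ) * (2 * (Real.pi:ℂ) * Complex.I) =
            (2 * (Real.pi:ℂ) * Complex.I) * c := by ring
        rw [e1, e2] at hc
        exact mul_left_cancel₀ hpi hc
      have h3 : (t:ℂ) = (c:ℂ) * N := by
        rw [div_eq_iff hNC] at h2; exact h2
      have h4 : t = c * N := by exact_mod_cast h3
      exact ⟨c, by linarith⟩
    have hzN : z ^ N = 1 := by
      rw [hz, ← Complex.exp_nat_mul]
      have harg : (N:ℂ) * (2 * Real.pi * Complex.I * t / N) = t * (2 * Real.pi * Complex.I) := by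
        field_simp
      rw [harg]
      exact Complex.exp_int_mul_two_pi_mul_I t
    rw [geom_sum_eq hz1, hzN]
    simp [hdvd]

end H0

namespace H0

lemma exp_dvd_eq_one {N : ℕ} (hN : 0 < N) {t : ℤ} (h : (N:ℤ) ∣ t) :
    Complex.exp (2 * Real.pi * Complex.I * t / N) = 1 := by
  have hNC : (N:ℂ) ≠ 0 := Nat.cast_ne_zero.mpr hN.ne'
  obtain ⟨c, hc⟩ := h
  have : 2 * Real.pi * Complex.I * t / N = c * (2 * Real.pi * Complex.I) := by
    have h2 : (t:ℂ) = (N:ℂ) * (c:ℂ) := by exact_mod_cast congrArg (Int.cast : ℤ → ℂ) hc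
    rw [h2, mul_div_assoc, mul_div_cancel_left₀ _ hNC]
    ring
  rw [this]
  exact Complex.exp_int_mul_two_pi_mul_I c

lemma sum_exp_Icc {N : ℕ} (hN : 0 < N) (t : ℤ) :
    ∑ k ∈ Finset.Icc 1 N, Complex.exp (2 * Real.pi * Complex.I * t * k / N) =
      if (N:ℤ) ∣ t then (N:ℂ) else 0 := by
  have h1 : Finset.Icc 1 N = Finset.Ico 1 (N+1) := (Finset.Ico_add_one_right_eq_Icc 1 N).symm
  rw [h1, Finset.sum_Ico_eq_sum_range]
  simp only [Nat.add_sub_cancel]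
  have hsplit : ∀ i : ℕ, Complex.exp (2 * Real.pi * Complex.I * t * (((1 + i : ℕ)):ℂ) / N) =
      Complex.exp (2 * Real.pi * Complex.I * t / N) *
        Complex.exp (2 * Real.pi * Complex.I * t * (i:ℂ) / N) := by
    intro i
    rw [← Complex.exp_add]
    congr 1
    push_cast
    ring
  simp_rw [hsplit]
  rw [← Finset.mul_sum, sum_exp_range hN t]
  by_cases h : (N:ℤ) ∣ t
  · rw [if_pos h, exp_dvd_eq_one hN h, one_mul]
  · rw [if_neg h, mul_zero]

end H0

open H0 in
theorem stmt12 (s r : ℕ) (hs : 0 < s) (hr : 0 < r) (f g : ℕ → ℂ)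
    (hf : IsRSEven s r f) (hg : IsRSEven s r g)
    (hfg : ∀ n : ℕ, f n = ∑ d ∈ r.divisors, g d * crs s d n) :
    ∀ n m : ℕ, 0 < n → m ^ s = r ^ s / ggcd s n (r ^ s) →
      g m = (1 / (r : ℂ) ^ s) * ∑ d ∈ r.divisors, f (r ^ s / d ^ s) * crs s d n := by
  intro n m hn hm
  have hrs0 : r ^ s ≠ 0 := pow_ne_zero _ hr.ne'
  have hNpos : 0 < r ^ s := Nat.pos_of_ne_zero hrs0
  -- the representative k' of -n mod r^s
  set N := r ^ s with hN
  set k' : ℕ := (N - n % N - 1) % N + 1 with hk'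
  have hk'1 : 1 ≤ k' := le_add_self
  have hk'2 : k' ≤ N := by
    have := Nat.mod_lt (N - n % N - 1) hNpos
    omega
  have hk'd : N ∣ k' + n := by
    have h1 : (N - n % N - 1) % N = N - n % N - 1 := Nat.mod_eq_of_lt (by
      have := Nat.mod_lt n hNpos; omega)
    have h2 := Nat.div_add_mod n N
    have h3 := Nat.mod_lt n hNpos
    refine ⟨n / N + 1, ?_⟩
    rw [Nat.mul_add, Nat.mul_one]
    omega
  -- decomposition of k'
  obtain ⟨d0, hd0r, j0, hj01, hj02, hj0c, hk'eq, hgg0⟩ := exists_decomp hs hr hk'1 hk'2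
  have hggn : ggcd s k' N = ggcd s n N := ggcd_congr hk'd
  have he0 : ∀ d : ℕ, d ∣ r → (r / d) ≠ 0 := by
    intro d hd
    have hd0 : d ≠ 0 := by rintro rfl; exact hr.ne' (Nat.eq_zero_of_zero_dvd hd)
    exact Nat.div_ne_zero_iff_of_dvd hd |>.mpr ⟨hr.ne', hd0⟩
  have hdee : ∀ d : ℕ, d ∣ r → d ^ s * (r / d) ^ s = N := by
    intro d hd
    rw [← mul_pow, Nat.mul_div_cancel' hd]
  -- m = d0
  have hmd0 : m = d0 := by
    have h1 : ggcd s n N = (r / d0) ^ s := by rw [← hggn, ← hgg0]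
    have h2 : N / ggcd s n N = d0 ^ s := by
      rw [h1, ← hdee d0 hd0r]
      exact Nat.mul_div_cancel _ (Nat.pos_of_ne_zero (pow_ne_zero _ (he0 d0 hd0r)))
    rw [h2] at hm
    exact Nat.pow_left_injective hs.ne' hm
  subst hmd0
  have hmr : m ∣ r := hd0r
  -- the key condition characterization
  have hcond : ∀ e : ℕ, e ∣ r → ∀ i : ℕ, 1 ≤ i → i ≤ e ^ s → ggcd s i (e ^ s) = 1 →
      (N ∣ i * (r / e) ^ s + n ↔ (e = m ∧ i = j0)) := by
    intro e her i hi1 hi2 hic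
    constructor
    · intro hdvd
      have hx1 : 1 ≤ i * (r / e) ^ s :=
        Nat.one_le_iff_ne_zero.mpr (Nat.mul_ne_zero (by omega) (pow_ne_zero _ (he0 e her)))
      have hx2 : i * (r / e) ^ s ≤ N := by
        calc i * (r / e) ^ s ≤ e ^ s * (r / e) ^ s := Nat.mul_le_mul_right _ hi2
          _ = N := hdee e her
      have hxk : i * (r / e) ^ s = k' := rep_unique hx1 hx2 hk'1 hk'2 hdvd hk'd
      have hgx : ggcd s (i * (r / e) ^ s) N = (r / e) ^ s := ggcd_mul_eq hs hr her hic
      rw [hxk] at hgx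
      have heq : (r / e) ^ s = (r / m) ^ s := by rw [← hgx, ← hgg0]
      have heq2 : r / e = r / m := Nat.pow_left_injective hs.ne' heq
      have hem : e = m := by
        rw [← Nat.div_div_self her hr.ne', heq2, Nat.div_div_self hmr hr.ne']
      refine ⟨hem, ?_⟩
      rw [hem] at hxk
      rw [hk'eq] at hxk
      exact Nat.eq_of_mul_eq_mul_right
        (Nat.pos_of_ne_zero (pow_ne_zero _ (he0 m hmr))) hxk
    · rintro ⟨rfl, rfl⟩
      rw [← hk'eq]
      exact hk'd
  -- analytic part
  have hNC : (N : ℂ) ≠ 0 := Nat.cast_ne_zero.mpr hrs0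
  have hcrs : ∀ e k : ℕ, crs s e k =
      ∑ i ∈ (Icc 1 (e ^ s)).filter (fun i => ggcd s i (e ^ s) = 1),
        Complex.exp (2 * Real.pi * Complex.I * k * i / ((e:ℂ)) ^ s) := by
    intro e k
    rw [crs, Finset.sum_filter]
  have hcastN : (N : ℂ) = (r : ℂ) ^ s := by rw [hN]; push_cast; ring
  have hdeeC : ∀ d : ℕ, d ∣ r → ((d:ℂ)) ^ s * (((r / d : ℕ)):ℂ) ^ s = (N : ℂ) := by
    intro d hd
    rw [hN]
    exact_mod_cast hdee d hd
  have key1 : ∑ d ∈ r.divisors, f (N / d ^ s) * crs s d n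
      = ∑ k ∈ Icc 1 N, f k * Complex.exp (2 * Real.pi * Complex.I * n * k / (N : ℂ)) := by
    conv_rhs => rw [hN]
    rw [sum_Icc_partition hs hr]
    refine Finset.sum_congr rfl fun d hd => ?_
    rw [Nat.mem_divisors] at hd
    have hdr := hd.1
    have hd0 : d ≠ 0 := by rintro rfl; exact hr.ne' (Nat.eq_zero_of_zero_dvd hdr)
    have hdC : ((d:ℂ)) ^ s ≠ 0 := pow_ne_zero _ (Nat.cast_ne_zero.mpr hd0)
    have heC : (((r / d : ℕ)):ℂ) ^ s ≠ 0 := pow_ne_zero _ (Nat.cast_ne_zero.mpr (he0 d hdr))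
    rw [hcrs, Finset.mul_sum]
    refine Finset.sum_congr rfl fun j hj => ?_
    rw [Finset.mem_filter, Finset.mem_Icc] at hj
    have hfj : f (j * (r / d) ^ s) = f (N / d ^ s) := by
      rw [hf (j * (r / d) ^ s), ← hN, ggcd_mul_eq hs hr hdr hj.2]
      congr 1
      rw [← hdee d hdr]
      exact (Nat.mul_div_cancel_left _ (Nat.pos_of_ne_zero (pow_ne_zero _ hd0))).symm
    rw [hfj]
    have hdc : ((d:ℂ)) ^ s * (((r / d : ℕ)):ℂ) ^ s = ((r:ℂ)) ^ s := by
      rw [hdeeC d hdr, hcastN]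
    have hrC : ((r:ℂ)) ^ s ≠ 0 := pow_ne_zero _ (Nat.cast_ne_zero.mpr hr.ne')
    refine congrArg (fun z => f (N / d ^ s) * Complex.exp z) ?_
    push_cast
    rw [div_eq_div_iff hdC hrC, ← hdc]
    ring
  have hrC : ((r:ℂ)) ^ s ≠ 0 := pow_ne_zero _ (Nat.cast_ne_zero.mpr hr.ne')
  have key2 : ∑ k ∈ Icc 1 N, f k * Complex.exp (2 * Real.pi * Complex.I * n * k / (N:ℂ))
      = (N:ℂ) * g m := by
    have hrw : ∀ k : ℕ, f k * Complex.exp (2 * Real.pi * Complex.I * n * k / (N:ℂ))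
        = ∑ e ∈ r.divisors,
            g e * (crs s e k * Complex.exp (2 * Real.pi * Complex.I * n * k / (N:ℂ))) := by
      intro k
      rw [hfg k, Finset.sum_mul]
      exact Finset.sum_congr rfl fun e _ => (mul_assoc _ _ _)
    rw [Finset.sum_congr rfl fun k _ => hrw k, Finset.sum_comm]
    have hinner : ∀ e ∈ r.divisors,
        (∑ k ∈ Icc 1 N,
          g e * (crs s e k * Complex.exp (2 * Real.pi * Complex.I * n * k / (N:ℂ))))
        = g e * (if e = m then (N:ℂ) else 0) := by
      intro e hee
      rw [← Finset.mul_sum]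
      congr 1
      rw [Nat.mem_divisors] at hee
      have her := hee.1
      have he00 : e ≠ 0 := fun h0 => hr.ne' (by subst h0; exact Nat.eq_zero_of_zero_dvd her)
      have heC : ((e:ℂ)) ^ s ≠ 0 := pow_ne_zero _ (Nat.cast_ne_zero.mpr he00)
      have hxC : (((r / e : ℕ)):ℂ) ^ s ≠ 0 := pow_ne_zero _ (Nat.cast_ne_zero.mpr (he0 e her))
      have hdc := hdeeC e her
      have hstep2 : ∀ k : ℕ,
          crs s e k * Complex.exp (2 * Real.pi * Complex.I * n * k / (N:ℂ))
          = ∑ i ∈ (Icc 1 (e ^ s)).filter (fun i => ggcd s i (e ^ s) = 1),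
              Complex.exp (2 * Real.pi * Complex.I *
                (((i * (r / e) ^ s + n : ℕ) : ℤ) : ℂ) * k / (N:ℂ)) := by
        intro k
        rw [hcrs e k, Finset.sum_mul]
        refine Finset.sum_congr rfl fun i hi => ?_
        rw [← Complex.exp_add]
        refine congrArg Complex.exp ?_
        rw [Int.cast_natCast]
        push_cast
        rw [← hdc]
        field_simp
      rw [Finset.sum_congr rfl fun k _ => hstep2 k, Finset.sum_comm]
      have hsum : ∀ i : ℕ,
          ∑ k ∈ Icc 1 N, Complex.exp (2 * Real.pi * Complex.I *
              (((i * (r / e) ^ s + n : ℕ) : ℤ) : ℂ) * k / (N:ℂ))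
          = if N ∣ i * (r / e) ^ s + n then (N:ℂ) else 0 := by
        intro i
        rw [sum_exp_Icc hNpos ((i * (r / e) ^ s + n : ℕ) : ℤ)]
        simp only [Int.natCast_dvd_natCast]
      rw [Finset.sum_congr rfl fun i _ => hsum i]
      by_cases hem : e = m
      · subst hem
        rw [if_pos rfl]
        have hite : ∀ i ∈ (Icc 1 (e ^ s)).filter (fun i => ggcd s i (e ^ s) = 1),
            (if N ∣ i * (r / e) ^ s + n then (N:ℂ) else 0)
            = if i = j0 then (N:ℂ) else 0 := by
          intro i hi
          rw [Finset.mem_filter, Finset.mem_Icc] at hi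
          have hc := hcond e her i hi.1.1 hi.1.2 hi.2
          by_cases h2 : i = j0
          · subst h2; rw [if_pos rfl, if_pos (hc.mpr ⟨rfl, rfl⟩)]
          · rw [if_neg h2, if_neg (fun hd2 => h2 ((hc.mp hd2).2))]
        have hmem : j0 ∈ (Icc 1 (e ^ s)).filter (fun i => ggcd s i (e ^ s) = 1) :=
          Finset.mem_filter.mpr ⟨Finset.mem_Icc.mpr ⟨hj01, hj02⟩, hj0c⟩
        rw [Finset.sum_congr rfl hite,
          Finset.sum_ite_eq' ((Icc 1 (e ^ s)).filter (fun i => ggcd s i (e ^ s) = 1)) j0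
            (fun _ => (N:ℂ)), if_pos hmem]
      · rw [if_neg hem]
        refine Finset.sum_eq_zero fun i hi => ?_
        rw [Finset.mem_filter, Finset.mem_Icc] at hi
        rw [if_neg (fun hd2 => hem ((hcond e her i hi.1.1 hi.1.2 hi.2).mp hd2).1)]
    rw [Finset.sum_congr rfl hinner]
    have hite2 : ∀ e ∈ r.divisors, g e * (if e = m then (N:ℂ) else 0)
        = if e = m then g e * (N:ℂ) else 0 := fun e _ => by split <;> simp
    rw [Finset.sum_congr rfl hite2, Finset.sum_ite_eq' _ m (fun e => g e * (N:ℂ)),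
      if_pos (Nat.mem_divisors.mpr ⟨hmr, hr.ne'⟩)]
    ring
  rw [key1, key2, hcastN]
  field_simp
end

section
/- If f is an (r,s)-even function, then Σ_{n=1}^{r^s} |f̂(n)|² = r^s Σ_{d | r} |f(d^s)|² J_s(r^s/d^s), where J_s is the Jordan totient function and f̂ is the DFT over period r^s. -/
open Finset

/-- `J_s(l^s)` as a count: the number of `n` with `1 ≤ n ≤ m` and `(n,m)_s = 1`. -/
noncomputable def jcount (s m : ℕ) : ℕ :=
  Nat.card {n : ℕ // 1 ≤ n ∧ n ≤ m ∧ ggcd s n m = 1}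

lemma ggcd_bdd (s a b : ℕ) (hb : b ≠ 0) :
    BddAbove {m : ℕ | (∃ l : ℕ, m = l ^ s) ∧ m ∣ a ∧ m ∣ b} :=
  ⟨b, fun _ hx => Nat.le_of_dvd (Nat.pos_of_ne_zero hb) hx.2.2⟩

lemma ggcd_spec_s13 (s a b : ℕ) (hb : b ≠ 0) :
    (∃ l, ggcd s a b = l ^ s) ∧ ggcd s a b ∣ a ∧ ggcd s a b ∣ b := by
  have h1 : (1:ℕ) ∈ {m : ℕ | (∃ l : ℕ, m = l ^ s) ∧ m ∣ a ∧ m ∣ b} :=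
    ⟨⟨1, (one_pow s).symm⟩, one_dvd _, one_dvd _⟩
  exact Nat.sSup_mem ⟨1, h1⟩ (ggcd_bdd s a b hb)

lemma pow_dvd_iff_fact {s x n : ℕ} (hs : s ≠ 0) (hx : x ≠ 0) (hn : n ≠ 0) :
    x ^ s ∣ n ↔ ∀ p, s * x.factorization p ≤ n.factorization p := by
  rw [← Nat.factorization_le_iff_dvd (pow_ne_zero s hx) hn, Nat.factorization_pow,
    Finsupp.le_def]
  simp [Finsupp.smul_apply]

lemma dvd_ggcd {s a b e : ℕ} (hs : s ≠ 0) (ha : a ≠ 0) (hb : b ≠ 0)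
    (h1 : e ^ s ∣ a) (h2 : e ^ s ∣ b) : e ^ s ∣ ggcd s a b := by
  obtain ⟨⟨g, hg⟩, hga, hgb⟩ := ggcd_spec_s13 s a b hb
  have he : e ≠ 0 := by
    rintro rfl
    rw [zero_pow hs] at h1
    exact ha (zero_dvd_iff.mp h1)
  have hg0 : g ≠ 0 := by
    rintro rfl
    rw [zero_pow hs] at hg
    exact ha (zero_dvd_iff.mp (hg ▸ hga))
  set c := Nat.lcm e g with hc
  have hc0 : c ≠ 0 := Nat.lcm_ne_zero he hg0
  have hcfact : ∀ p, c.factorization p = max (e.factorization p) (g.factorization p) := by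
    intro p
    rw [hc, Nat.factorization_lcm he hg0]
    simp [Finsupp.sup_apply]
  have hca : c ^ s ∣ a := by
    rw [pow_dvd_iff_fact hs hc0 ha]
    intro p
    rw [hcfact p]
    have h3 := (pow_dvd_iff_fact hs he ha).mp h1 p
    have h4 := (pow_dvd_iff_fact hs hg0 ha).mp ((hg ▸ hga : g ^ s ∣ a)) p
    rcases le_total (e.factorization p) (g.factorization p) with h5 | h5
    · rwa [max_eq_right h5]
    · rwa [max_eq_left h5]
  have hcb : c ^ s ∣ b := by
    rw [pow_dvd_iff_fact hs hc0 hb]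
    intro p
    rw [hcfact p]
    rw [show s * (e.factorization p ⊔ g.factorization p) = max (s * e.factorization p) (s * g.factorization p) from (Nat.mul_max_mul_left ..).symm ▸ rfl]
    exact max_le ((pow_dvd_iff_fact hs he hb).mp h2 p)
      ((pow_dvd_iff_fact hs hg0 hb).mp ((hg ▸ hgb : g ^ s ∣ b)) p)
  have hmem : c ^ s ∈ {m : ℕ | (∃ l : ℕ, m = l ^ s) ∧ m ∣ a ∧ m ∣ b} :=
    ⟨⟨c, rfl⟩, hca, hcb⟩
  have hle : c ^ s ≤ ggcd s a b := le_csSup (ggcd_bdd s a b hb) hmem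
  have hgc : g ^ s ∣ c ^ s := pow_dvd_pow_of_dvd (Nat.dvd_lcm_right e g) s
  have : c ^ s = g ^ s := le_antisymm (hg ▸ hle) (Nat.le_of_dvd (Nat.pos_of_ne_zero (pow_ne_zero s hc0)) hgc)
  calc e ^ s ∣ c ^ s := pow_dvd_pow_of_dvd (Nat.dvd_lcm_left e g) s
    _ = g ^ s := this
    _ = ggcd s a b := hg.symm

lemma lemA {s d m M e : ℕ} (hs : s ≠ 0) (hd : d ≠ 0) (hm : m ≠ 0) (hM : M ≠ 0)
    (h1 : e ^ s ∣ d ^ s * m) (h2 : e ^ s ∣ d ^ s * M)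
    (hcop : ggcd s m M = 1) : e ∣ d := by
  have hdm : d ^ s * m ≠ 0 := mul_ne_zero (pow_ne_zero s hd) hm
  have hdM : d ^ s * M ≠ 0 := mul_ne_zero (pow_ne_zero s hd) hM
  have he : e ≠ 0 := by
    rintro rfl
    rw [zero_pow hs] at h1
    exact hdm (zero_dvd_iff.mp h1)
  rw [← Nat.factorization_le_iff_dvd he hd, Finsupp.le_def]
  intro p
  by_cases hp : p.Prime
  · by_contra hcon
    push_neg at hcon
    have hkey : ∀ n : ℕ, n ≠ 0 → e ^ s ∣ d ^ s * n → p ^ s ∣ n := by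
      intro n hn hdvd
      have := (pow_dvd_iff_fact hs he (mul_ne_zero (pow_ne_zero s hd) hn)).mp hdvd p
      rw [Nat.factorization_mul (pow_ne_zero s hd) hn, Finsupp.add_apply,
        Nat.factorization_pow, Finsupp.smul_apply, smul_eq_mul] at this
      have hps : s ≤ n.factorization p := by
        have h6 : s * (d.factorization p + 1) ≤ s * e.factorization p :=
          Nat.mul_le_mul_left s hcon
      -- s*d + s ≤ s*e ≤ s*d + n.f p
        have h7 : s * d.factorization p + s ≤ s * d.factorization p + n.factorization p := by
          calc s * d.factorization p + s = s * (d.factorization p + 1) := by ring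
            _ ≤ s * e.factorization p := h6
            _ ≤ s * d.factorization p + n.factorization p := this
        omega
      exact (Nat.Prime.pow_dvd_iff_le_factorization hp hn).mpr hps
    have hpm := hkey m hm h1
    have hpM := hkey M hM h2
    have := dvd_ggcd hs hm hM hpm hpM
    rw [hcop, Nat.dvd_one] at this
    exact hp.one_lt.ne' ((pow_eq_one_iff.mp this).resolve_right hs)
  · simp [Nat.factorization_eq_zero_of_not_prime _ hp]

lemma jcount_eq (s m : ℕ) :
    jcount s m = ((Icc 1 m).filter fun n => ggcd s n m = 1).card := by
  rw [jcount, ← Nat.card_eq_finsetCard]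
  exact Nat.card_congr (Equiv.subtypeEquivRight (by simp [mem_filter, mem_Icc, and_assoc]))



lemma fiber_card {s r d : ℕ} (hs : s ≠ 0) (hr : r ≠ 0) (hd : d ∣ r) :
    ((Icc 1 (r ^ s)).filter fun k => ggcd s k (r ^ s) = d ^ s).card
      = ((Icc 1 (r ^ s / d ^ s)).filter fun n => ggcd s n (r ^ s / d ^ s) = 1).card := by
  have hd0 : d ≠ 0 := fun h => hr (Nat.eq_zero_of_zero_dvd (h ▸ hd))
  have hds0 : d ^ s ≠ 0 := pow_ne_zero s hd0
  have hN0 : r ^ s ≠ 0 := pow_ne_zero s hr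
  have hds : d ^ s ∣ r ^ s := pow_dvd_pow_of_dvd hd s
  set M := r ^ s / d ^ s with hMdef
  have hNM : r ^ s = d ^ s * M := (Nat.mul_div_cancel' hds).symm
  have hM0 : M ≠ 0 := by
    intro h; rw [h, mul_zero] at hNM; exact hN0 hNM
  apply Finset.card_nbij' (fun k => k / d ^ s) (fun n => d ^ s * n)
  · intro k hk
    simp only [mem_coe, mem_filter, mem_Icc] at hk ⊢
    obtain ⟨⟨hk1, hk2⟩, hgk⟩ := hk
    have hk0 : k ≠ 0 := by omega
    have hdk : d ^ s ∣ k := hgk ▸ (ggcd_spec_s13 s k (r ^ s) hN0).2.1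
    obtain ⟨m, rfl⟩ := hdk
    have hm0 : m ≠ 0 := by rintro rfl; simp at hk1
    have hmd : d ^ s * m / d ^ s = m := Nat.mul_div_cancel_left m (Nat.pos_of_ne_zero hds0)
    refine ⟨⟨hmd ▸ (by omega : 1 ≤ d ^ s * m / d ^ s) , ?_⟩, ?_⟩
    · rw [hmd]
      have : d ^ s * m ≤ d ^ s * M := hNM ▸ hk2
      exact le_of_mul_le_mul_left this (Nat.pos_of_ne_zero hds0)
    · rw [hmd]
      obtain ⟨⟨g, hg⟩, hga, hgb⟩ := ggcd_spec_s13 s m M hM0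
      have hdg1 : (d * g) ^ s ∣ d ^ s * m := by
        rw [mul_pow]; exact Nat.mul_dvd_mul_left _ (hg ▸ hga)
      have hdg2 : (d * g) ^ s ∣ r ^ s := by
        rw [hNM, mul_pow]; exact Nat.mul_dvd_mul_left _ (hg ▸ hgb)
      have := dvd_ggcd hs (mul_ne_zero hds0 hm0) hN0 hdg1 hdg2
      rw [hgk, mul_pow] at this
      have hgs : g ^ s ∣ 1 := by
        refine (Nat.mul_dvd_mul_iff_left (Nat.pos_of_ne_zero hds0)).mp ?_
        rwa [mul_one]
      rw [hg, Nat.dvd_one.mp hgs]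
  · intro n hn
    simp only [mem_coe, mem_filter, mem_Icc] at hn ⊢
    obtain ⟨⟨hn1, hn2⟩, hgn⟩ := hn
    have hn0 : n ≠ 0 := by omega
    constructor
    · constructor
      · exact Nat.one_le_iff_ne_zero.mpr (mul_ne_zero hds0 hn0)
      · rw [hNM]; exact Nat.mul_le_mul_left _ hn2
    · -- ggcd s (d^s * n) (r^s) = d^s
      obtain ⟨⟨e, he⟩, hea, heb⟩ := ggcd_spec_s13 s (d ^ s * n) (r ^ s) hN0
      have hde : d ^ s ∣ ggcd s (d ^ s * n) (r ^ s) :=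
        dvd_ggcd hs (mul_ne_zero hds0 hn0) hN0 (Dvd.intro n rfl) hds
      have hcop : ∀ g : ℕ, g ^ s ∣ n → g ^ s ∣ M → g = 1 := by
        intro g h1 h2
        have := dvd_ggcd hs hn0 hM0 h1 h2
        rw [hgn, Nat.dvd_one] at this
        exact (pow_eq_one_iff.mp this).resolve_right hs
      have hed : e ∣ d := by
        refine lemA hs hd0 hn0 hM0 (he ▸ hea) (he ▸ (hNM ▸ heb)) ?_
        obtain ⟨⟨g, hg⟩, hga, hgb⟩ := ggcd_spec_s13 s n M hM0
        rw [hg, hcop g (hg ▸ hga) (hg ▸ hgb), one_pow]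
      exact Nat.dvd_antisymm (he ▸ pow_dvd_pow_of_dvd hed s) hde
  · intro k hk
    simp only [mem_coe, mem_filter, mem_Icc] at hk
    have hdk : d ^ s ∣ k := hk.2 ▸ (ggcd_spec_s13 s k (r ^ s) hN0).2.1
    exact Nat.mul_div_cancel' hdk
  · intro n hn
    exact Nat.mul_div_cancel_left n (Nat.pos_of_ne_zero hds0)


open Complex in
lemma expsum (N : ℕ) (hN : N ≠ 0) (c : ℤ) :
    ∑ n ∈ Icc 1 N, Complex.exp (2 * Real.pi * Complex.I * c * n / N)
      = if (N : ℤ) ∣ c then (N : ℂ) else 0 := by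
  have hNc : (N : ℂ) ≠ 0 := Nat.cast_ne_zero.mpr hN
  set w : ℂ := Complex.exp (2 * Real.pi * Complex.I * c / N) with hw
  have hwn : ∀ n : ℕ, Complex.exp (2 * Real.pi * Complex.I * c * n / N) = w ^ n := by
    intro n
    rw [hw, ← Complex.exp_nat_mul]
    congr 1
    field_simp
  have hwN : w ^ N = 1 := by
    rw [hw, ← Complex.exp_nat_mul]
    have : (N : ℂ) * (2 * Real.pi * Complex.I * c / N) = c * (2 * Real.pi * Complex.I) := by
      field_simp
    rw [this, Complex.exp_int_mul_two_pi_mul_I]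
  by_cases hdvd : (N : ℤ) ∣ c
  · obtain ⟨t, rfl⟩ := hdvd
    have hw1 : w = 1 := by
      rw [hw]
      have : 2 * (Real.pi : ℂ) * Complex.I * ((N : ℤ) * t : ℤ) / N
          = (t : ℂ) * (2 * Real.pi * Complex.I) := by
        push_cast
        field_simp
      rw [this, Complex.exp_int_mul_two_pi_mul_I]
    simp only [hwn, hw1, one_pow, sum_const, Nat.card_Icc, smul_eq_mul, mul_one, if_pos (dvd_mul_right (N:ℤ) t)]
    norm_num
  · have hw1 : w ≠ 1 := by
      intro h
      rw [hw, Complex.exp_eq_one_iff] at h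
      obtain ⟨n, hn⟩ := h
      have hpi : (2 : ℂ) * Real.pi * Complex.I ≠ 0 := by
        simp [Real.pi_ne_zero, Complex.I_ne_zero, Complex.ofReal_ne_zero]
      have : (c : ℂ) = (N : ℂ) * n := by
        field_simp at hn
        have h2 : 2 * (Real.pi : ℂ) * Complex.I * c = 2 * Real.pi * Complex.I * (N * n) := by
          rw [hn]
        exact mul_left_cancel₀ hpi h2
      exact hdvd ⟨n, by exact_mod_cast this⟩
    rw [if_neg hdvd]
    calc ∑ n ∈ Icc 1 N, Complex.exp (2 * Real.pi * Complex.I * c * n / N)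
        = ∑ n ∈ Icc 1 N, w ^ n := by simp only [hwn]
      _ = ∑ n ∈ range N, w ^ (1 + n) := by
          rw [show Icc 1 N = Ico 1 (N + 1) from (Finset.Ico_add_one_right_eq_Icc ..).symm,
            Finset.sum_Ico_eq_sum_range]
          simp
      _ = w * ∑ n ∈ range N, w ^ n := by
          rw [mul_sum]; exact sum_congr rfl fun n _ => by rw [pow_add, pow_one]
      _ = 0 := by rw [geom_sum_eq hw1, hwN]; simp

open Complex in
lemma parseval (N : ℕ) (hN : N ≠ 0) (f : ℕ → ℂ) :
    ∑ n ∈ Icc 1 N,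
        (∑ k ∈ Icc 1 N, f k * Complex.exp (-(2 * Real.pi * Complex.I * k * n / N))) *
          (starRingEnd ℂ) (∑ k ∈ Icc 1 N, f k * Complex.exp (-(2 * Real.pi * Complex.I * k * n / N)))
      = N * ∑ k ∈ Icc 1 N, f k * (starRingEnd ℂ) (f k) := by
  have hNc : (N : ℂ) ≠ 0 := Nat.cast_ne_zero.mpr hN
  have hconj : ∀ j n : ℕ,
      (starRingEnd ℂ) (Complex.exp (-(2 * Real.pi * Complex.I * j * n / N)))
        = Complex.exp (2 * Real.pi * Complex.I * j * n / N) := by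
    intro j n
    rw [← Complex.exp_conj]
    congr 1
    simp only [map_neg, map_div₀, map_mul, Complex.conj_I, Complex.conj_ofReal, map_ofNat,
      map_natCast]
    ring
  have key : ∀ n : ℕ,
      (∑ k ∈ Icc 1 N, f k * Complex.exp (-(2 * Real.pi * Complex.I * k * n / N))) *
          (starRingEnd ℂ) (∑ k ∈ Icc 1 N, f k * Complex.exp (-(2 * Real.pi * Complex.I * k * n / N)))
        = ∑ k ∈ Icc 1 N, ∑ j ∈ Icc 1 N, f k * (starRingEnd ℂ) (f j) *
            Complex.exp (2 * Real.pi * Complex.I * (((j : ℤ) - (k : ℤ) : ℤ) : ℂ) * n / N) := by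
    intro n
    rw [map_sum, Finset.sum_mul_sum]
    refine sum_congr rfl fun k _ => sum_congr rfl fun j _ => ?_
    rw [map_mul, hconj j n]
    rw [show f k * Complex.exp (-(2 * Real.pi * Complex.I * k * n / N)) *
        ((starRingEnd ℂ) (f j) * Complex.exp (2 * Real.pi * Complex.I * j * n / N))
      = f k * (starRingEnd ℂ) (f j) *
        (Complex.exp (-(2 * Real.pi * Complex.I * k * n / N)) *
          Complex.exp (2 * Real.pi * Complex.I * j * n / N)) by ring]
    rw [← Complex.exp_add]
    congr 2
    push_cast
    field_simp
    ring
  calc ∑ n ∈ Icc 1 N,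
        (∑ k ∈ Icc 1 N, f k * Complex.exp (-(2 * Real.pi * Complex.I * k * n / N))) *
          (starRingEnd ℂ) (∑ k ∈ Icc 1 N, f k * Complex.exp (-(2 * Real.pi * Complex.I * k * n / N)))
      = ∑ n ∈ Icc 1 N, ∑ k ∈ Icc 1 N, ∑ j ∈ Icc 1 N, f k * (starRingEnd ℂ) (f j) *
          Complex.exp (2 * Real.pi * Complex.I * (((j : ℤ) - (k : ℤ) : ℤ) : ℂ) * n / N) :=
        sum_congr rfl fun n _ => key n
    _ = ∑ k ∈ Icc 1 N, ∑ j ∈ Icc 1 N, ∑ n ∈ Icc 1 N, f k * (starRingEnd ℂ) (f j) *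
          Complex.exp (2 * Real.pi * Complex.I * (((j : ℤ) - (k : ℤ) : ℤ) : ℂ) * n / N) := by
        rw [Finset.sum_comm]
        exact sum_congr rfl fun k _ => Finset.sum_comm
    _ = ∑ k ∈ Icc 1 N, ∑ j ∈ Icc 1 N, f k * (starRingEnd ℂ) (f j) *
          (if (N : ℤ) ∣ ((j : ℤ) - (k : ℤ)) then (N : ℂ) else 0) := by
        refine sum_congr rfl fun k _ => sum_congr rfl fun j _ => ?_
        rw [← mul_sum, expsum N hN ((j : ℤ) - (k : ℤ))]
    _ = ∑ k ∈ Icc 1 N, f k * (starRingEnd ℂ) (f k) * N := by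
        refine sum_congr rfl fun k hk => ?_
        rw [Finset.sum_eq_single_of_mem k hk]
        · rw [if_pos (sub_self (k : ℤ) ▸ dvd_zero _)]
        · intro j hj hjk
          rw [if_neg, mul_zero]
          intro hdvd
          simp only [mem_Icc] at hk hj
          obtain ⟨t, ht⟩ := hdvd
          have hb1 : -(N : ℤ) < (j : ℤ) - (k : ℤ) := by
            have : (1 : ℤ) ≤ j := by exact_mod_cast hj.1
            have : (k : ℤ) ≤ N := by exact_mod_cast hk.2
            omega
          have hb2 : ((j : ℤ) - (k : ℤ)) < N := by
            have : (j : ℤ) ≤ N := by exact_mod_cast hj.2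
            have : (1 : ℤ) ≤ k := by exact_mod_cast hk.1
            omega
          have hN' : (0 : ℤ) < N := by exact_mod_cast Nat.pos_of_ne_zero hN
          have ht0 : t = 0 := by
            by_contra h
            rcases lt_or_gt_of_ne h with h | h
            · have : (N : ℤ) * t ≤ -N := by
                have : t ≤ -1 := by omega
                nlinarith
              omega
            · have : (N : ℤ) ≤ N * t := by
                have : 1 ≤ t := by omega
                nlinarith
              omega
          rw [ht0, mul_zero] at ht
          exact hjk (by exact_mod_cast (by omega : (j : ℤ) = k))
    _ = N * ∑ k ∈ Icc 1 N, f k * (starRingEnd ℂ) (f k) := by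
        rw [mul_sum]
        exact sum_congr rfl fun k _ => mul_comm _ _

theorem stmt13 (s r : ℕ) (hs : 0 < s) (hr : 0 < r) (f : ℕ → ℂ)
    (hf : IsRSEven s r f) :
    ∑ n ∈ Finset.Icc 1 (r ^ s), ‖dft s r f n‖ ^ 2 =
      (r : ℝ) ^ s * ∑ d ∈ r.divisors,
        ‖f (d ^ s)‖ ^ 2 * (jcount s (r ^ s / d ^ s) : ℝ) := by
  have hN0 : r ^ s ≠ 0 := pow_ne_zero s hr.ne'
  have habs : ∀ z : ℂ, ((‖z‖ ^ 2 : ℝ) : ℂ) = z * (starRingEnd ℂ) z := by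
    intro z
    rw [Complex.ofReal_pow, ← Complex.ofReal_pow, Complex.sq_norm, ← Complex.mul_conj]
  have step1 : ∑ n ∈ Icc 1 (r ^ s), ‖dft s r f n‖ ^ 2
      = ((r ^ s : ℕ) : ℝ) * ∑ k ∈ Icc 1 (r ^ s), ‖f k‖ ^ 2 := by
    have hpar := parseval (r ^ s) hN0 f
    simp only [Nat.cast_pow] at hpar
    apply Complex.ofReal_injective
    rw [Complex.ofReal_mul, Complex.ofReal_sum, Complex.ofReal_sum]
    rw [show (∑ n ∈ Icc 1 (r ^ s), ((‖dft s r f n‖ ^ 2 : ℝ) : ℂ))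
        = ∑ n ∈ Icc 1 (r ^ s), dft s r f n * (starRingEnd ℂ) (dft s r f n)
      from sum_congr rfl fun n _ => habs _]
    rw [show (∑ k ∈ Icc 1 (r ^ s), ((‖f k‖ ^ 2 : ℝ) : ℂ))
        = ∑ k ∈ Icc 1 (r ^ s), f k * (starRingEnd ℂ) (f k)
      from sum_congr rfl fun k _ => habs _]
    simp only [dft]
    push_cast
    exact hpar
  have step2 : ∑ k ∈ Icc 1 (r ^ s), ‖f k‖ ^ 2
      = ∑ d ∈ r.divisors, ‖f (d ^ s)‖ ^ 2 * (jcount s (r ^ s / d ^ s) : ℝ) := by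
    have expand : ∀ k ∈ Icc 1 (r ^ s), ‖f k‖ ^ 2
        = ∑ d ∈ r.divisors, if ggcd s k (r ^ s) = d ^ s then ‖f k‖ ^ 2 else 0 := by
      intro k hk
      obtain ⟨⟨l, hl⟩, hla, hlb⟩ := ggcd_spec_s13 s k (r ^ s) hN0
      have hlr : l ∣ r := (Nat.pow_dvd_pow_iff hs.ne').mp (hl ▸ hlb)
      rw [Finset.sum_eq_single_of_mem l (Nat.mem_divisors.mpr ⟨hlr, hr.ne'⟩)]
      · rw [if_pos hl]
      · intro b _ hbl
        rw [if_neg]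
        intro h
        exact hbl (Nat.pow_left_injective hs.ne' (h ▸ hl ▸ rfl : b ^ s = l ^ s))
    rw [sum_congr rfl expand, Finset.sum_comm]
    refine sum_congr rfl fun d hd => ?_
    rw [← Finset.sum_filter]
    rw [show (∑ k ∈ (Icc 1 (r ^ s)).filter (fun k => ggcd s k (r ^ s) = d ^ s),
          ‖f k‖ ^ 2)
        = ∑ k ∈ (Icc 1 (r ^ s)).filter (fun k => ggcd s k (r ^ s) = d ^ s),
          ‖f (d ^ s)‖ ^ 2 from sum_congr rfl fun k hk => by
            rw [hf k, (mem_filter.mp hk).2]]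
    rw [sum_const, fiber_card hs.ne' hr.ne' (Nat.mem_divisors.mp hd).1, ← jcount_eq]
    simp [nsmul_eq_mul, mul_comm]
  rw [step1, step2]
  push_cast
  ring
end
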